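/- arXiv:1307.2937 — 3 statements merged into one kernel-verified Lean document; each statement's English description precedes it below -/
import Mathlib

section
/- Let F be a perfect analytic field of characteristic p with norm |·|' and let z ∈ W(o_F) be primitive. Then every class in W(o_F)/(z) is represented by a stable element of W(o_F). -/
open scoped NNReal ENNReal

set_option synthInstance.maxHeartbeats 1000000
set_option maxHeartbeats 1000000

/-- The valuation ring `o_F` of an analytic field `F` (a field complete with respect to a
multiplicative nonarchimedean norm, given by a rank-one valuation). -/
noncomputable abbrev OK (F : Type*) [Field F] [Valued F ℝ≥0] : Subring F :=
  Valued.v.integer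

/-- The norm `|x̄_n|'` of the `n`-th Teichmüller coordinate of a Witt vector
`x = Σ pⁿ [x̄_n] ∈ W(o_F)` over a perfect field: since `x̄_n = (x.coeff n)^(p⁻ⁿ)`,
this is `|x.coeff n|'^(p⁻ⁿ)`. -/
noncomputable def tcNorm (p : ℕ) [Fact p.Prime] (F : Type*) [Field F] [Valued F ℝ≥0]
    (x : WittVector p (OK F)) (n : ℕ) : ℝ≥0 :=
  Valued.v ((x.coeff n : OK F) : F) ^ ((((p : ℝ))⁻¹ ^ n : ℝ))

/-- A Witt vector `x = Σ pⁿ [x̄_n] ∈ W(o_F)` is stable if `|x̄_n|' ≤ |x̄_0|'`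
for all `n > 0`. -/
def IsStable (p : ℕ) [Fact p.Prime] (F : Type*) [Field F] [Valued F ℝ≥0]
    (x : WittVector p (OK F)) : Prop :=
  ∀ n : ℕ, 0 < n → tcNorm p F x n ≤ tcNorm p F x 0

/-- A Witt vector `z = Σ pⁿ [z̄_n] ∈ W(o_F)` is primitive if `|z̄_0|' = p⁻¹` and
`|z̄_1|' = 1`; in terms of Witt coordinates, `|z.coeff 0|' = p⁻¹` and `|z.coeff 1|' = 1`. -/
def IsPrimitive (p : ℕ) [Fact p.Prime] (F : Type*) [Field F] [Valued F ℝ≥0]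
    (z : WittVector p (OK F)) : Prop :=
  Valued.v ((z.coeff 0 : OK F) : F) = (p : ℝ≥0)⁻¹ ∧
  Valued.v ((z.coeff 1 : OK F) : F) = 1


open MvPolynomial Finset

namespace StableRep

lemma whPow {R σ : Type*} [CommSemiring R] {w : σ → ℕ}
    {φ : MvPolynomial σ R} {m : ℕ} (h : φ.IsWeightedHomogeneous w m) (k : ℕ) :
    (φ ^ k).IsWeightedHomogeneous w (k * m) := by
  have := MvPolynomial.IsWeightedHomogeneous.prod (Finset.range k) (fun _ => φ) (fun _ => m)
    (w := w) (fun _ _ => h)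
  simpa [Finset.prod_const, Finset.card_range, Finset.sum_const, smul_eq_mul] using this

lemma isWeightedHomogeneous_aeval {R σ τ : Type*} [CommSemiring R]
    (w : σ → ℕ) (w' : τ → ℕ) (c : ℕ) (f : σ → MvPolynomial τ R) (P : MvPolynomial σ R) (m : ℕ)
    (hP : P.IsWeightedHomogeneous w m)
    (hf : ∀ s, (f s).IsWeightedHomogeneous w' (c * w s)) :
    (aeval f P).IsWeightedHomogeneous w' (c * m) := by
  conv_lhs => rw [P.as_sum]
  rw [map_sum]
  apply MvPolynomial.IsWeightedHomogeneous.sum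
  intro d hd
  rw [aeval_monomial]
  have hw : Finsupp.weight w d = m := hP (mem_support_iff.mp hd)
  have hprod : (Finsupp.prod d fun s e => f s ^ e).IsWeightedHomogeneous w' (c * m) := by
    rw [Finsupp.prod]
    have h2 := MvPolynomial.IsWeightedHomogeneous.prod d.support (fun s => f s ^ d s)
      (fun s => d s * (c * w s)) (w := w') (fun i _ => whPow (hf i) (d i))
    have h3 : ∑ i ∈ d.support, d i * (c * w i) = c * m := by
      rw [← hw, Finsupp.weight_apply, Finsupp.sum]
      rw [Finset.mul_sum]
      apply Finset.sum_congr rfl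
      intro i _
      simp [smul_eq_mul]
      ring
    rwa [h3] at h2
  have hC : (algebraMap R (MvPolynomial τ R) (coeff d P)).IsWeightedHomogeneous w' 0 :=
    isWeightedHomogeneous_C w' (coeff d P)
  simpa using hC.mul hprod

lemma isWeightedHomogeneous_rename {R σ τ : Type*} [CommSemiring R] (g : σ → τ) (w' : τ → ℕ)
    (P : MvPolynomial σ R) (m : ℕ) (hP : P.IsWeightedHomogeneous (fun s => w' (g s)) m) :
    (rename g P).IsWeightedHomogeneous w' m := by
  intro d hd
  obtain ⟨u, hu, hc⟩ := coeff_rename_ne_zero g P d hd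
  have hPu := hP hc
  rw [← hu]
  rw [Finsupp.weight_apply] at hPu ⊢
  rw [Finsupp.sum_mapDomain_index (fun i => zero_smul ℕ (w' i))
    (fun i b₁ b₂ => add_smul b₁ b₂ (w' i))]
  exact hPu

lemma isWeightedHomogeneous_wittPolynomial {R : Type*} [CommRing R] (p : ℕ) [Fact p.Prime]
    (c n : ℕ) :
    (wittPolynomial p R n).IsWeightedHomogeneous (fun i => c * p ^ i) (c * p ^ n) := by
  unfold wittPolynomial
  apply MvPolynomial.IsWeightedHomogeneous.sum
  intro i hi
  apply isWeightedHomogeneous_monomial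
  rw [Finsupp.weight_apply, Finsupp.sum_single_index (by simp)]
  have hin : i ≤ n := Nat.lt_succ_iff.mp (Finset.mem_range.mp hi)
  simp only [smul_eq_mul]
  rw [show p ^ (n - i) * (c * p ^ i) = c * (p ^ (n - i) * p ^ i) by ring, ← pow_add,
    Nat.sub_add_cancel hin]

lemma isWeightedHomogeneous_xInTermsOfW (p : ℕ) [Fact p.Prime] (n : ℕ) :
    (xInTermsOfW p ℚ n).IsWeightedHomogeneous (fun i => p ^ i) (p ^ n) := by
  induction n using Nat.strongRecOn with
  | ind n IH =>
    rw [xInTermsOfW_eq]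
    have hmem : (X n - ∑ i ∈ range n, C ((p:ℚ)^i) * xInTermsOfW p ℚ i ^ p ^ (n - i)) ∈
        weightedHomogeneousSubmodule ℚ (fun i => p ^ i) (p ^ n) := by
      apply Submodule.sub_mem
      · exact isWeightedHomogeneous_X ℚ _ n
      · apply Submodule.sum_mem
        intro i hi
        have hi' : i < n := Finset.mem_range.mp hi
        have h1 : ((xInTermsOfW p ℚ i) ^ p ^ (n - i)).IsWeightedHomogeneous
            (fun i => p ^ i) (p ^ (n - i) * p ^ i) := whPow (IH i hi') _
        have h2 : p ^ (n - i) * p ^ i = p ^ n := by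
          rw [← pow_add, Nat.sub_add_cancel hi'.le]
        rw [h2] at h1
        have := (isWeightedHomogeneous_C (R := ℚ) (fun i : ℕ => p ^ i) ((p:ℚ)^i)).mul h1
        simpa using this
    have : (((X n - ∑ i ∈ range n, C ((p:ℚ)^i) * xInTermsOfW p ℚ i ^ p ^ (n - i))) *
        C ((⅟(p:ℚ)) ^ n)).IsWeightedHomogeneous (fun i => p ^ i) (p ^ n + 0) :=
      MvPolynomial.IsWeightedHomogeneous.mul hmem (isWeightedHomogeneous_C _ _)
    simpa using this

end StableRep

open MvPolynomial Finset

namespace StableRep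

variable (p : ℕ) [Fact p.Prime]

lemma isWeightedHomogeneous_wittStructureRat {idx : Type*} (Φ : MvPolynomial idx ℚ)
    (wB : idx → ℕ) (dΦ : ℕ) (hΦ : Φ.IsWeightedHomogeneous wB dΦ) (n : ℕ) :
    (wittStructureRat p Φ n).IsWeightedHomogeneous (fun bi => wB bi.1 * p ^ bi.2) (dΦ * p ^ n) := by
  unfold wittStructureRat
  rw [show (bind₁ (fun k => bind₁ (fun i => rename (Prod.mk i) (wittPolynomial p ℚ k)) Φ)
      (xInTermsOfW p ℚ n)) = aeval (fun k => bind₁ (fun i => rename (Prod.mk i)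
      (wittPolynomial p ℚ k)) Φ) (xInTermsOfW p ℚ n) from rfl]
  apply isWeightedHomogeneous_aeval (fun k => p ^ k) _ dΦ _ _ (p ^ n)
    (isWeightedHomogeneous_xInTermsOfW p n)
  intro k
  rw [show (bind₁ (fun i => rename (Prod.mk i) (wittPolynomial p ℚ k)) Φ) =
    aeval (fun i => rename (Prod.mk i) (wittPolynomial p ℚ k)) Φ from rfl]
  have := isWeightedHomogeneous_aeval wB (fun bi : idx × ℕ => wB bi.1 * p ^ bi.2) (p ^ k)
    (fun i => rename (Prod.mk i) (wittPolynomial p ℚ k)) Φ dΦ hΦ ?_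
  · rwa [mul_comm] at this
  · intro b
    apply isWeightedHomogeneous_rename
    have := isWeightedHomogeneous_wittPolynomial (R := ℚ) p (wB b) k
    rwa [mul_comm (wB b) (p ^ k)] at this

lemma isWeightedHomogeneous_of_map {σ : Type*} (φ : MvPolynomial σ ℤ) (w : σ → ℕ) (m : ℕ)
    (h : (map (Int.castRingHom ℚ) φ).IsWeightedHomogeneous w m) :
    φ.IsWeightedHomogeneous w m := by
  intro d hd
  apply h
  rw [coeff_map]
  simpa using hd

lemma isWeightedHomogeneous_map {σ : Type*} (φ : MvPolynomial σ ℤ) (w : σ → ℕ) (m : ℕ)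
    (h : φ.IsWeightedHomogeneous w m) :
    (map (Int.castRingHom ℚ) φ).IsWeightedHomogeneous w m := by
  intro d hd
  apply h
  rw [coeff_map] at hd
  intro h0
  simp [h0] at hd

lemma isWeightedHomogeneous_wittStructureInt {idx : Type*} (Φ : MvPolynomial idx ℤ)
    (wB : idx → ℕ) (dΦ : ℕ) (hΦ : Φ.IsWeightedHomogeneous wB dΦ) (n : ℕ) :
    (wittStructureInt p Φ n).IsWeightedHomogeneous (fun bi => wB bi.1 * p ^ bi.2) (dΦ * p ^ n) := by
  apply isWeightedHomogeneous_of_map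
  rw [map_wittStructureInt]
  exact isWeightedHomogeneous_wittStructureRat p _ wB dΦ (isWeightedHomogeneous_map _ _ _ hΦ) n

lemma wittSub_homog (n : ℕ) :
    (WittVector.wittSub p n).IsWeightedHomogeneous (fun bi : Fin 2 × ℕ => p ^ bi.2) (p ^ n) := by
  have hΦ : (X 0 - X 1 : MvPolynomial (Fin 2) ℤ).IsWeightedHomogeneous (fun _ => 1) 1 := by
    apply Submodule.sub_mem (weightedHomogeneousSubmodule ℤ (fun _ : Fin 2 => 1) 1)
    · exact isWeightedHomogeneous_X ℤ _ 0
    · exact isWeightedHomogeneous_X ℤ _ 1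
  have := isWeightedHomogeneous_wittStructureInt p (X 0 - X 1) (fun _ => 1) 1 hΦ n
  simpa [WittVector.wittSub] using this

lemma wittMul_homogL (n : ℕ) :
    (WittVector.wittMul p n).IsWeightedHomogeneous
      (fun bi : Fin 2 × ℕ => if bi.1 = 0 then p ^ bi.2 else 0) (p ^ n) := by
  have hΦ : (X 0 * X 1 : MvPolynomial (Fin 2) ℤ).IsWeightedHomogeneous
      (fun b => if b = 0 then 1 else 0) 1 := by
    have := MvPolynomial.IsWeightedHomogeneous.mul
      (isWeightedHomogeneous_X ℤ (fun b : Fin 2 => if b = 0 then 1 else 0) 0)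
      (isWeightedHomogeneous_X ℤ (fun b : Fin 2 => if b = 0 then 1 else 0) 1)
    simpa using this
  have := isWeightedHomogeneous_wittStructureInt p (X 0 * X 1) _ 1 hΦ n
  simp only [one_mul] at this
  have hfun : (fun bi : Fin 2 × ℕ => (if bi.1 = 0 then 1 else 0) * p ^ bi.2)
      = fun bi : Fin 2 × ℕ => if bi.1 = 0 then p ^ bi.2 else 0 := by
    funext bi; by_cases h : bi.1 = 0 <;> simp [h]
  rwa [hfun] at this

lemma wittMul_homogR (n : ℕ) :
    (WittVector.wittMul p n).IsWeightedHomogeneous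
      (fun bi : Fin 2 × ℕ => if bi.1 = 1 then p ^ bi.2 else 0) (p ^ n) := by
  have hΦ : (X 0 * X 1 : MvPolynomial (Fin 2) ℤ).IsWeightedHomogeneous
      (fun b => if b = 1 then 1 else 0) 1 := by
    have := MvPolynomial.IsWeightedHomogeneous.mul
      (isWeightedHomogeneous_X ℤ (fun b : Fin 2 => if b = 1 then 1 else 0) 0)
      (isWeightedHomogeneous_X ℤ (fun b : Fin 2 => if b = 1 then 1 else 0) 1)
    simpa using this
  have := isWeightedHomogeneous_wittStructureInt p (X 0 * X 1) _ 1 hΦ n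
  simp only [one_mul] at this
  have hfun : (fun bi : Fin 2 × ℕ => (if bi.1 = 1 then 1 else 0) * p ^ bi.2)
      = fun bi : Fin 2 × ℕ => if bi.1 = 1 then p ^ bi.2 else 0 := by
    funext bi; by_cases h : bi.1 = 1 <;> simp [h]
  rwa [hfun] at this

end StableRep

open MvPolynomial Finset

namespace StableRep

open scoped NNReal

variable {F : Type*} [Field F] [Valued F ℝ≥0]

lemma val_natCast_le_one (n : ℕ) : Valued.v ((n : F)) ≤ 1 := by
  induction n with
  | zero => simp
  | succ k ih =>
    push_cast
    refine le_trans (Valued.v.map_add _ _) ?_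
    simp [ih]

lemma val_intCast_le_one (k : ℤ) : Valued.v ((k : F)) ≤ 1 := by
  induction k using Int.rec with
  | ofNat n =>
    rw [Int.ofNat_eq_natCast, Int.cast_natCast]
    exact val_natCast_le_one n
  | negSucc n =>
    rw [Int.cast_negSucc, Valuation.map_neg]
    exact_mod_cast val_natCast_le_one (n + 1)

lemma val_aeval_le {ι : Type*} (φ : MvPolynomial ι ℤ) (g : ι → F) (M : ι → ℝ≥0) (C : ℝ≥0)
    (hg : ∀ i, Valued.v (g i) ≤ M i)
    (hC : ∀ d ∈ φ.support, (∏ i ∈ d.support, M i ^ d i) ≤ C) :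
    Valued.v (aeval g φ) ≤ C := by
  rw [aeval_def, eval₂_eq]
  apply Valuation.map_sum_le
  intro d hd
  rw [Valuation.map_mul]
  have h1 : Valued.v (algebraMap ℤ F (coeff d φ)) ≤ 1 := val_intCast_le_one _
  have h2 : Valued.v (∏ i ∈ d.support, g i ^ d i) ≤ ∏ i ∈ d.support, M i ^ d i := by
    rw [map_prod]
    apply Finset.prod_le_prod' 
    intro i _
    rw [map_pow]
    exact pow_le_pow_left' (hg i) _
  calc Valued.v (algebraMap ℤ F (coeff d φ)) * Valued.v (∏ i ∈ d.support, g i ^ d i)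
      ≤ 1 * (∏ i ∈ d.support, M i ^ d i) := mul_le_mul' h1 h2
    _ ≤ C := by rw [one_mul]; exact hC d hd

lemma val_aeval_le_of_homog2 {ι : Type*} (φ : MvPolynomial ι ℤ) (g : ι → F)
    (w1 w2 : ι → ℕ) (m1 m2 : ℕ) (B1 B2 : ℝ≥0)
    (h1 : φ.IsWeightedHomogeneous w1 m1) (h2 : φ.IsWeightedHomogeneous w2 m2)
    (hg : ∀ i, Valued.v (g i) ≤ B1 ^ w1 i * B2 ^ w2 i) :
    Valued.v (aeval g φ) ≤ B1 ^ m1 * B2 ^ m2 := by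
  apply val_aeval_le φ g (fun i => B1 ^ w1 i * B2 ^ w2 i) _ hg
  intro d hd
  have e1 : Finsupp.weight w1 d = m1 := h1 (mem_support_iff.mp hd)
  have e2 : Finsupp.weight w2 d = m2 := h2 (mem_support_iff.mp hd)
  have : (∏ i ∈ d.support, (B1 ^ w1 i * B2 ^ w2 i) ^ d i)
      = (∏ i ∈ d.support, B1 ^ (w1 i * d i)) * ∏ i ∈ d.support, B2 ^ (w2 i * d i) := by
    rw [← Finset.prod_mul_distrib]
    apply Finset.prod_congr rfl
    intro i _
    rw [mul_pow, pow_mul, pow_mul]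
  rw [this]
  have hs1 : (∏ i ∈ d.support, B1 ^ (w1 i * d i)) = B1 ^ m1 := by
    rw [Finset.prod_pow_eq_pow_sum]
    congr 1
    rw [← e1, Finsupp.weight_apply, Finsupp.sum]
    apply Finset.sum_congr rfl
    intro i _
    simp [smul_eq_mul, mul_comm]
  have hs2 : (∏ i ∈ d.support, B2 ^ (w2 i * d i)) = B2 ^ m2 := by
    rw [Finset.prod_pow_eq_pow_sum]
    congr 1
    rw [← e2, Finsupp.weight_apply, Finsupp.sum]
    apply Finset.sum_congr rfl
    intro i _
    simp [smul_eq_mul, mul_comm]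
  rw [hs1, hs2]

lemma val_aeval_le_of_homog {ι : Type*} (φ : MvPolynomial ι ℤ) (g : ι → F)
    (w : ι → ℕ) (m : ℕ) (B : ℝ≥0)
    (h : φ.IsWeightedHomogeneous w m)
    (hg : ∀ i, Valued.v (g i) ≤ B ^ w i) :
    Valued.v (aeval g φ) ≤ B ^ m := by
  have := val_aeval_le_of_homog2 φ g w w m m B 1 h h (fun i => by simpa using hg i)
  simpa using this

end StableRep

open MvPolynomial Finset WittVector

namespace StableRep

open scoped NNReal

variable (p : ℕ) [Fact p.Prime] (F : Type*) [Field F] [Valued F ℝ≥0]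

lemma val_mem_OK (t : OK F) : Valued.v (t : F) ≤ 1 := t.2

lemma ringHom_aeval_comm {A B : Type*} {ι : Type*} [CommRing A] [CommRing B] (f : A →+* B)
    (g : ι → A) (φ : MvPolynomial ι ℤ) : f (aeval g φ) = aeval (fun i => f (g i)) φ := by
  rw [map_aeval, show f.comp (algebraMap ℤ A) = algebraMap ℤ B from Subsingleton.elim _ _]
  simp [coe_eval₂Hom, aeval_def]

lemma coe_peval (φ : MvPolynomial (Fin 2 × ℕ) ℤ) (f : Fin 2 → ℕ → OK F) :
    ((peval φ f : OK F) : F) = aeval (fun q => ((Function.uncurry f q : OK F) : F)) φ := by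
  have := ringHom_aeval_comm (OK F).subtype (Function.uncurry f) φ
  exact this

section charp

variable [CharP F p] [ExpChar F p] [PerfectRing F p]

instance : ExpChar (OK F) p := ExpChar.prime Fact.out

instance : PerfectRing (OK F) p := by
  constructor
  constructor
  · intro s t hst
    apply Subtype.ext
    apply (PerfectRing.bijective_frobenius (R := F) (p := p)).1
    have : ((frobenius (OK F) p s : OK F) : F) = ((frobenius (OK F) p t : OK F) : F) := by
      exact congrArg Subtype.val hst
    simp only [frobenius_def] at this ⊢
    push_cast at this
    exact this
  · intro t
    have hle : Valued.v ((frobeniusEquiv F p).symm (t : F)) ≤ 1 := by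
      by_contra hlt
      push_neg at hlt
      have h1 : (1 : ℝ≥0) < Valued.v ((frobeniusEquiv F p).symm (t : F)) ^ p :=
        one_lt_pow₀ hlt (Fact.out (p := p.Prime)).ne_zero
      rw [← Valuation.map_pow, frobeniusEquiv_symm_pow_p] at h1
      exact absurd (val_mem_OK F t) (not_le.mpr h1)
    refine ⟨⟨(frobeniusEquiv F p).symm (t : F), hle⟩, ?_⟩
    apply Subtype.ext
    simp only [frobenius_def]
    push_cast
    exact frobeniusEquiv_symm_pow_p F p (t : F)

/-- p-th root in `O`. -/
noncomputable def prt (t : OK F) : OK F := (frobeniusEquiv (OK F) p).symm t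

lemma prt_pow (t : OK F) : (prt p F t) ^ p = t := frobeniusEquiv_symm_pow_p _ p t

lemma val_prt_pow (t : OK F) : Valued.v ((prt p F t : OK F) : F) ^ p = Valued.v (t : F) := by
  have h : ((prt p F t : OK F) : F) ^ p = ((t : OK F) : F) := by
    rw [← SubmonoidClass.coe_pow, prt_pow]
  rw [← Valuation.map_pow, h]

/-- `F⁻¹(shift x)`, i.e. the Witt vector `x'` with `x = [x₀] + p·x'`. -/
noncomputable def shiftRoot (x : WittVector p (OK F)) : WittVector p (OK F) :=
  WittVector.mk p fun n => prt p F (x.coeff (n + 1))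

@[simp] lemma shiftRoot_coeff (x : WittVector p (OK F)) (n : ℕ) :
    (shiftRoot p F x).coeff n = prt p F (x.coeff (n + 1)) := rfl

theorem decomp (x : WittVector p (OK F)) :
    x = teichmuller p (x.coeff 0) + (p : WittVector p (OK F)) * shiftRoot p F x := by
  have hps : (p : WittVector p (OK F)) * shiftRoot p F x = shiftRoot p F x * p := mul_comm _ _
  ext n
  match n with
  | 0 =>
    rw [add_coeff_zero, teichmuller_coeff_zero, hps, mul_charP_coeff_zero, add_zero]
  | (n+1) =>
    rw [coeff_add_of_disjoint]
    · rw [teichmuller_coeff_pos p _ (n+1) (Nat.succ_pos n), zero_add, hps,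
        mul_charP_coeff_succ, shiftRoot_coeff, prt_pow]
    · intro k
      match k with
      | 0 => right; rw [hps, mul_charP_coeff_zero]
      | (k+1) => left; exact teichmuller_coeff_pos p _ (k+1) (Nat.succ_pos k)

end charp

/-- Coordinatewise valuation bound in Teichmüller scale. -/
def Bnd (x : WittVector p (OK F)) (T : ℝ≥0) : Prop :=
  ∀ n, Valued.v ((x.coeff n : OK F) : F) ≤ T ^ p ^ n

lemma Bnd.mono {x : WittVector p (OK F)} {T T' : ℝ≥0} (h : Bnd p F x T) (hTT' : T ≤ T') :
    Bnd p F x T' := fun n => le_trans (h n) (pow_le_pow_left' hTT' _)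

lemma Bnd_one (x : WittVector p (OK F)) : Bnd p F x 1 := fun n => by
  simpa using val_mem_OK F (x.coeff n)

lemma Bnd_teichmuller (a : OK F) (T : ℝ≥0) (ha : Valued.v (a : F) ≤ T) :
    Bnd p F (teichmuller p a) T := by
  intro n
  match n with
  | 0 => simpa using ha
  | (n+1) => simp [teichmuller_coeff_pos p _ (n+1) (Nat.succ_pos n)]

lemma Bnd.mul {b c : WittVector p (OK F)} {T1 T2 : ℝ≥0} (hb : Bnd p F b T1)
    (hc : Bnd p F c T2) : Bnd p F (b * c) (T1 * T2) := by
  intro n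
  rw [mul_coeff, coe_peval, mul_pow]
  apply val_aeval_le_of_homog2 (wittMul p n) _ _ _ (p ^ n) (p ^ n) T1 T2
    (wittMul_homogL p n) (wittMul_homogR p n)
  rintro ⟨b2, i⟩
  fin_cases b2
  · simpa [Function.uncurry] using (hb i).trans (by simp)
  · simpa [Function.uncurry] using (hc i).trans (by simp)

lemma Bnd.sub {b c : WittVector p (OK F)} {T : ℝ≥0} (hb : Bnd p F b T)
    (hc : Bnd p F c T) : Bnd p F (b - c) T := by
  intro n
  rw [sub_coeff, coe_peval]
  apply val_aeval_le_of_homog (wittSub p n) _ _ (p ^ n) T (wittSub_homog p n)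
  rintro ⟨b2, i⟩
  fin_cases b2
  · simpa [Function.uncurry] using hb i
  · simpa [Function.uncurry] using hc i

/-- The ideal of elements of `O` of valuation at most `ε`. -/
def smallIdeal (ε : ℝ≥0) : Ideal (OK F) where
  carrier := {t | Valued.v (t : F) ≤ ε}
  zero_mem' := by simp
  add_mem' := by
    intro a b ha hb
    have : Valued.v ((a + b : OK F) : F) ≤ max (Valued.v (a : F)) (Valued.v (b : F)) := by
      push_cast
      exact Valued.v.map_add _ _
    exact le_trans this (max_le ha hb)
  smul_mem' := by
    intro r t ht
    have : Valued.v ((r * t : OK F) : F) = Valued.v (r : F) * Valued.v (t : F) := by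
      push_cast
      exact Valuation.map_mul _ _ _
    simp only [smul_eq_mul, Set.mem_setOf_eq, this]
    calc Valued.v (r : F) * Valued.v (t : F) ≤ 1 * ε :=
          mul_le_mul' (val_mem_OK F r) ht
      _ = ε := one_mul ε

lemma mem_smallIdeal_iff {ε : ℝ≥0} {t : OK F} : t ∈ smallIdeal F ε ↔ Valued.v (t : F) ≤ ε :=
  Iff.rfl

lemma aeval_sub_mem {ι : Type*} (φ : MvPolynomial ι ℤ) (g h : ι → OK F) (ε : ℝ≥0)
    (hgh : ∀ i, g i - h i ∈ smallIdeal F ε) :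
    aeval g φ - aeval h φ ∈ smallIdeal F ε := by
  set I := smallIdeal F ε
  have key : (fun i => Ideal.Quotient.mk I (g i)) = fun i => Ideal.Quotient.mk I (h i) :=
    funext fun i => (Ideal.Quotient.mk_eq_mk_iff_sub_mem _ _).mpr (hgh i)
  have h0 : Ideal.Quotient.mk I (aeval g φ - aeval h φ) = 0 := by
    rw [map_sub, ringHom_aeval_comm (Ideal.Quotient.mk I) g φ,
      ringHom_aeval_comm (Ideal.Quotient.mk I) h φ, key, sub_self]
  exact (Ideal.Quotient.eq_zero_iff_mem).mp h0

lemma peval_sub_mem (φ : MvPolynomial (Fin 2 × ℕ) ℤ) (b c b' c' : WittVector p (OK F)) (ε : ℝ≥0)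
    (hb : ∀ j, b.coeff j - b'.coeff j ∈ smallIdeal F ε)
    (hc : ∀ j, c.coeff j - c'.coeff j ∈ smallIdeal F ε) :
    peval φ ![b.coeff, c.coeff] - peval φ ![b'.coeff, c'.coeff] ∈ smallIdeal F ε := by
  apply aeval_sub_mem
  rintro ⟨b2, j⟩
  fin_cases b2
  · simpa [Function.uncurry] using hb j
  · simpa [Function.uncurry] using hc j

end StableRep

open MvPolynomial Finset WittVector

namespace StableRep

open scoped NNReal

variable (p : ℕ) [Fact p.Prime] (F : Type*) [Field F] [Valued F ℝ≥0]

lemma tcNorm_le_iff (x : WittVector p (OK F)) (n : ℕ) (T : ℝ≥0) :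
    tcNorm p F x n ≤ T ↔ Valued.v ((x.coeff n : OK F) : F) ≤ T ^ p ^ n := by
  unfold tcNorm
  set a := Valued.v ((x.coeff n : OK F) : F) with hadef
  have hppos : (0:ℝ) < (p:ℝ) ^ n :=
    pow_pos (by exact_mod_cast (Fact.out (p := p.Prime)).pos) n
  rw [show (((p:ℝ))⁻¹ ^ n : ℝ) = (((p:ℝ)) ^ n)⁻¹ from inv_pow _ _]
  rw [← NNReal.rpow_le_rpow_iff hppos, ← NNReal.rpow_mul,
    inv_mul_cancel₀ (ne_of_gt hppos), NNReal.rpow_one]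
  constructor
  · intro h
    calc a ≤ T ^ ((p:ℝ) ^ n) := h
      _ = T ^ ((p ^ n : ℕ) : ℝ) := by norm_cast
      _ = T ^ (p ^ n : ℕ) := NNReal.rpow_natCast T _
  · intro h
    calc a ≤ T ^ (p ^ n : ℕ) := h
      _ = T ^ ((p ^ n : ℕ) : ℝ) := (NNReal.rpow_natCast T _).symm
      _ = T ^ ((p:ℝ) ^ n) := by norm_cast

lemma tcNorm_zero_eq (x : WittVector p (OK F)) :
    tcNorm p F x 0 = Valued.v ((x.coeff 0 : OK F) : F) := by
  unfold tcNorm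
  rw [pow_zero, NNReal.rpow_one]

lemma tcNorm_le_one (x : WittVector p (OK F)) (n : ℕ) : tcNorm p F x n ≤ 1 := by
  rw [tcNorm_le_iff, one_pow]
  exact val_mem_OK F _

lemma bnd_iff_tc (x : WittVector p (OK F)) (T : ℝ≥0) :
    Bnd p F x T ↔ ∀ n, tcNorm p F x n ≤ T :=
  forall_congr' fun n => (tcNorm_le_iff p F x n T).symm

lemma pow_shrink {T : ℝ≥0} (hT : T ≤ 1) {m : ℕ} (hm : 1 ≤ m) : T ^ m ≤ T := by
  calc T ^ m ≤ T ^ 1 := pow_le_pow_of_le_one zero_le hT hm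
    _ = T := pow_one T

section charp

variable [CharP F p] [ExpChar F p] [PerfectRing F p]

lemma Bnd_shiftRoot (w : WittVector p (OK F)) (M : ℝ≥0)
    (hM : ∀ n, tcNorm p F w (n+1) ≤ M) : Bnd p F (shiftRoot p F w) M := by
  intro n
  rw [shiftRoot_coeff]
  have h1 : Valued.v ((w.coeff (n+1) : OK F) : F) ≤ M ^ p ^ (n+1) :=
    (tcNorm_le_iff p F w (n+1) M).mp (hM n)
  have h2 : Valued.v ((prt p F (w.coeff (n+1)) : OK F) : F) ^ p ≤ (M ^ p ^ n) ^ p := by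
    rw [val_prt_pow, ← pow_mul, ← pow_succ]
    exact h1
  by_contra hc
  push_neg at hc
  exact absurd h2 (not_le.mpr (pow_lt_pow_left₀ hc zero_le
    (Fact.out (p := p.Prime)).ne_zero))

lemma sub_coeff_zero' {R : Type*} [CommRing R] (x y : WittVector p R) :
    (x - y).coeff 0 = x.coeff 0 - y.coeff 0 := by
  have h := add_coeff_zero (p := p) (x - y) y
  rw [sub_add_cancel] at h
  exact eq_sub_of_add_eq h.symm

end charp

end StableRep

open MvPolynomial Finset WittVector

namespace StableRep

open scoped NNReal

variable (p : ℕ) [Fact p.Prime] (F : Type*) [Field F] [Valued F ℝ≥0]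

section main

variable [CharP F p] [ExpChar F p] [PerfectRing F p]

/-- One step of Kedlaya's division algorithm. -/
noncomputable def stepFn (z iU : WittVector p (OK F)) (w : WittVector p (OK F)) :
    WittVector p (OK F) :=
  teichmuller p (w.coeff 0) - teichmuller p (z.coeff 0) * (iU * shiftRoot p F w)

lemma step_key (z iU : WittVector p (OK F)) (hui : shiftRoot p F z * iU = 1)
    (w : WittVector p (OK F)) :
    w - stepFn p F z iU w = z * (iU * shiftRoot p F w) := by
  unfold stepFn
  have hw := decomp p F w
  have hz := decomp p F z
  calc w - (teichmuller p (w.coeff 0) - teichmuller p (z.coeff 0) * (iU * shiftRoot p F w))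
      = (teichmuller p (w.coeff 0) + (p : WittVector p (OK F)) * shiftRoot p F w)
        - (teichmuller p (w.coeff 0) - teichmuller p (z.coeff 0) * (iU * shiftRoot p F w)) := by
        rw [← hw]
    _ = (teichmuller p (z.coeff 0) + (p : WittVector p (OK F)) * shiftRoot p F z)
        * (iU * shiftRoot p F w) := by
        linear_combination (-((p : WittVector p (OK F)) * shiftRoot p F w)) * hui
    _ = z * (iU * shiftRoot p F w) := by rw [← hz]

variable (z : WittVector p (OK F))

lemma step_bnd (hz0 : Valued.v ((z.coeff 0 : OK F) : F) = (p : ℝ≥0)⁻¹)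
    (iU w : WittVector p (OK F)) (M : ℝ≥0)
    (hM : ∀ n, tcNorm p F w (n+1) ≤ M) :
    Bnd p F (stepFn p F z iU w)
      (max (Valued.v ((w.coeff 0 : OK F) : F)) ((p : ℝ≥0)⁻¹ * M)) := by
  have h2 : Bnd p F (shiftRoot p F w) M := Bnd_shiftRoot p F w M hM
  have h3 : Bnd p F iU 1 := Bnd_one p F iU
  have h4 : Bnd p F (teichmuller p (z.coeff 0)) ((p : ℝ≥0)⁻¹) :=
    Bnd_teichmuller p F _ _ (le_of_eq hz0)
  have h5 := Bnd.mul p F h4 (Bnd.mul p F h3 h2)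
  rw [one_mul] at h5
  have h1 : Bnd p F (teichmuller p (w.coeff 0))
      (max (Valued.v ((w.coeff 0 : OK F) : F)) ((p : ℝ≥0)⁻¹ * M)) :=
    Bnd_teichmuller p F _ _ (le_max_left _ _)
  exact Bnd.sub p F h1 (Bnd.mono p F h5 (le_max_right _ _))

lemma step_coeff_zero (iU w : WittVector p (OK F)) :
    (stepFn p F z iU w).coeff 0
      = w.coeff 0 - z.coeff 0 * (iU.coeff 0 * prt p F (w.coeff 1)) := by
  unfold stepFn
  rw [sub_coeff_zero', teichmuller_coeff_zero, mul_coeff_zero, teichmuller_coeff_zero,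
    mul_coeff_zero, shiftRoot_coeff]

lemma val_prt_le (t : OK F) (M : ℝ≥0) (h : Valued.v ((t : OK F) : F) ≤ M ^ p) :
    Valued.v ((prt p F t : OK F) : F) ≤ M := by
  by_contra hc
  push_neg at hc
  have h2 : M ^ p < Valued.v ((prt p F t : OK F) : F) ^ p :=
    pow_lt_pow_left₀ hc zero_le (Fact.out (p := p.Prime)).ne_zero
  rw [val_prt_pow] at h2
  exact absurd h (not_le.mpr h2)

lemma corr_bound (hz0 : Valued.v ((z.coeff 0 : OK F) : F) = (p : ℝ≥0)⁻¹)
    (iU w : WittVector p (OK F)) (M : ℝ≥0) (hM : tcNorm p F w 1 ≤ M) :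
    Valued.v (((z.coeff 0 * (iU.coeff 0 * prt p F (w.coeff 1)) : OK F) : F))
      ≤ (p : ℝ≥0)⁻¹ * M := by
  have h1 : Valued.v ((w.coeff 1 : OK F) : F) ≤ M ^ p := by
    have := (tcNorm_le_iff p F w 1 M).mp hM
    rwa [pow_one] at this
  have hprt : Valued.v ((prt p F (w.coeff 1) : OK F) : F) ≤ M := val_prt_le p F _ M h1
  have hcoe : ((z.coeff 0 * (iU.coeff 0 * prt p F (w.coeff 1)) : OK F) : F)
      = ((z.coeff 0 : OK F) : F) * (((iU.coeff 0 : OK F) : F) * ((prt p F (w.coeff 1) : OK F) : F)) := by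
    push_cast
    ring
  rw [hcoe, Valuation.map_mul, Valuation.map_mul, hz0]
  calc (p : ℝ≥0)⁻¹ * (Valued.v ((iU.coeff 0 : OK F) : F) * Valued.v ((prt p F (w.coeff 1) : OK F) : F))
      ≤ (p : ℝ≥0)⁻¹ * (1 * M) := by
        exact mul_le_mul' le_rfl (mul_le_mul' (val_mem_OK F _) hprt)
    _ = (p : ℝ≥0)⁻¹ * M := by rw [one_mul]

/-- The iteration sequence. -/
noncomputable def Xseq (iU x : WittVector p (OK F)) (k : ℕ) : WittVector p (OK F) :=
  (stepFn p F z iU)^[k] x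

/-- The partial quotients. -/
noncomputable def Qseq (iU x : WittVector p (OK F)) : ℕ → WittVector p (OK F)
  | 0 => 0
  | (k+1) => Qseq iU x k + iU * shiftRoot p F (Xseq p F z iU x k)

lemma Xseq_zero (iU x : WittVector p (OK F)) : Xseq p F z iU x 0 = x := rfl

lemma Xseq_succ (iU x : WittVector p (OK F)) (k : ℕ) :
    Xseq p F z iU x (k+1) = stepFn p F z iU (Xseq p F z iU x k) :=
  Function.iterate_succ_apply' _ k x

lemma Xseq_Qseq (iU x : WittVector p (OK F)) (hui : shiftRoot p F z * iU = 1) (k : ℕ) :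
    x - Xseq p F z iU x k = z * Qseq p F z iU x k := by
  induction k with
  | zero => simp [Xseq_zero, Qseq]
  | succ k ih =>
    rw [Xseq_succ, Qseq, mul_add, ← ih]
    have h := step_key p F z iU hui (Xseq p F z iU x k)
    linear_combination h

end main

end StableRep

open MvPolynomial Finset WittVector StableRep
set_option linter.unusedSectionVars false

/-- Division lemma: for any primitive `z ∈ W(o_F)`, every class of `W(o_F)/(z)` is
represented by a stable element. -/
theorem stable_representative (p : ℕ) [Fact p.Prime] (F : Type*) [Field F]
    [Valued F ℝ≥0] [CompleteSpace F] [ExpChar F p] [PerfectRing F p]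
    (z : WittVector p (OK F)) (hz : IsPrimitive p F z) (x : WittVector p (OK F)) :
    ∃ y : WittVector p (OK F), IsStable p F y ∧ z ∣ (x - y) := by
  classical
  haveI hcharF : CharP F p := by
    cases ‹ExpChar F p› with
    | zero => exact absurd (Fact.out (p := Nat.Prime 1)) Nat.not_prime_one
    | prime h => assumption
  obtain ⟨hz0, hz1⟩ := hz
  set pInv : ℝ≥0 := (p : ℝ≥0)⁻¹ with hpInvdef
  have hp1 : (1 : ℝ≥0) < p := by exact_mod_cast (Fact.out (p := p.Prime)).one_lt
  have hpInv_lt1 : pInv < 1 := by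
    rw [hpInvdef]
    exact inv_lt_one_of_one_lt₀ hp1
  have hpInv_le1 : pInv ≤ 1 := le_of_lt hpInv_lt1
  have hpInv_pos : 0 < pInv := by
    rw [hpInvdef]
    exact inv_pos.mpr (lt_trans zero_lt_one hp1)
  have hsmallpow : ∀ c : ℝ≥0, 0 < c → ∃ N : ℕ, pInv ^ N < c := fun c hc =>
    NNReal.exists_pow_lt_of_lt_one hc hpInv_lt1
  -- the unit u = shiftRoot z
  set u : WittVector p (OK F) := shiftRoot p F z with hu
  have hu0val : Valued.v ((u.coeff 0 : OK F) : F) = 1 := by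
    have h : Valued.v ((u.coeff 0 : OK F) : F) ^ p = 1 := by
      rw [hu, shiftRoot_coeff, val_prt_pow, hz1]
    by_contra hne
    rcases lt_or_gt_of_ne hne with hlt | hgt
    · have := pow_lt_one₀ zero_le hlt (Fact.out (p := p.Prime)).ne_zero
      rw [h] at this; exact lt_irrefl _ this
    · have := one_lt_pow₀ hgt (Fact.out (p := p.Prime)).ne_zero
      rw [h] at this; exact lt_irrefl _ this
  have hu0 : IsUnit (u.coeff 0) := by
    have hne : ((u.coeff 0 : OK F) : F) ≠ 0 := by
      intro h0; rw [h0] at hu0val; simp at hu0val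
    have hvinv : Valued.v (((u.coeff 0 : OK F) : F)⁻¹) = 1 := by
      have h := Valuation.map_mul Valued.v ((u.coeff 0 : OK F) : F) (((u.coeff 0 : OK F) : F)⁻¹)
      rw [mul_inv_cancel₀ hne, Valuation.map_one, hu0val, one_mul] at h
      exact h.symm
    refine isUnit_iff_exists_inv.mpr ⟨⟨((u.coeff 0 : OK F) : F)⁻¹, le_of_eq hvinv⟩, ?_⟩
    apply Subtype.ext
    push_cast
    exact mul_inv_cancel₀ hne
  have hUu : u.coeff 0 = ↑hu0.unit := (IsUnit.unit_spec hu0).symm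
  set U : Units (WittVector p (OK F)) := mkUnit hUu with hUdef
  have hUcoe : (U : WittVector p (OK F)) = u := coe_mkUnit hUu
  set iU : WittVector p (OK F) := ↑U⁻¹ with hiUdef
  have hui : shiftRoot p F z * iU = 1 := by
    rw [← hu, ← hUcoe, hiUdef]
    exact U.mul_inv
  -- sequences
  set X : ℕ → WittVector p (OK F) := Xseq p F z iU x with hXdef
  set Q : ℕ → WittVector p (OK F) := Qseq p F z iU x with hQdef
  have hXQ : ∀ k, x - X k = z * Q k := fun k => Xseq_Qseq p F z iU x hui k
  have hXsucc : ∀ k, X (k+1) = stepFn p F z iU (X k) := fun k => Xseq_succ p F z iU x k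
  have hbdd : ∀ w : WittVector p (OK F), BddAbove (Set.range fun n => tcNorm p F w (n+1)) := by
    intro w
    refine ⟨1, ?_⟩
    rintro _ ⟨n, rfl⟩
    exact tcNorm_le_one p F w (n+1)
  by_cases H : ∃ k, pInv * (⨆ n, tcNorm p F (X k) (n+1))
      < Valued.v (((X k).coeff 0 : OK F) : F)
  · -- a stable element is reached after finitely many steps
    obtain ⟨k, hk⟩ := H
    set M : ℝ≥0 := ⨆ n, tcNorm p F (X k) (n+1) with hMdef
    set β : ℝ≥0 := Valued.v (((X k).coeff 0 : OK F) : F) with hβdef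
    have hM : ∀ n, tcNorm p F (X k) (n+1) ≤ M := fun n => le_ciSup (hbdd (X k)) n
    have hbnd := step_bnd p F z hz0 iU (X k) M hM
    have hmax : max β (pInv * M) = β := max_eq_left (le_of_lt hk)
    rw [← hβdef, ← hpInvdef, hmax] at hbnd
    -- value of coefficient zero of the step
    have h0eq : Valued.v (((stepFn p F z iU (X k)).coeff 0 : OK F) : F) = β := by
      rw [step_coeff_zero]
      have hcorr := corr_bound p F z hz0 iU (X k) M (hM 0)
      rw [← hpInvdef] at hcorr
      have hlt : Valued.v (((z.coeff 0 * (iU.coeff 0 * prt p F ((X k).coeff 1)) : OK F) : F))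
          < β := lt_of_le_of_lt hcorr hk
      have hcoe : (((X k).coeff 0 - z.coeff 0 * (iU.coeff 0 * prt p F ((X k).coeff 1)) : OK F) : F)
          = (((X k).coeff 0 : OK F) : F)
            - ((z.coeff 0 * (iU.coeff 0 * prt p F ((X k).coeff 1)) : OK F) : F) := by
        push_cast; ring
      rw [hcoe]
      exact Valuation.map_sub_eq_of_lt_left _ hlt
    refine ⟨stepFn p F z iU (X k), ?_, ?_⟩
    · intro n hn
      have h1 : tcNorm p F (stepFn p F z iU (X k)) n ≤ β :=
        (tcNorm_le_iff p F _ n β).mpr (hbnd n)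
      have h0 : tcNorm p F (stepFn p F z iU (X k)) 0 = β := by
        rw [tcNorm_zero_eq]; exact h0eq
      rw [h0]; exact h1
    · have h := hXQ (k+1)
      rw [hXsucc k] at h
      exact ⟨Q (k+1), h⟩
  · -- perpetual contraction: x is divisible by z
    push_neg at H
    have hdecay : ∀ k n, tcNorm p F (X k) n ≤ pInv ^ k := by
      intro k
      induction k with
      | zero =>
        intro n
        rw [pow_zero]
        exact tcNorm_le_one p F _ n
      | succ k ih =>
        intro n
        have hMle : (⨆ n, tcNorm p F (X k) (n+1)) ≤ pInv ^ k :=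
          ciSup_le fun n => ih (n+1)
        have hM : ∀ n, tcNorm p F (X k) (n+1) ≤ (⨆ n, tcNorm p F (X k) (n+1)) :=
          fun n => le_ciSup (hbdd (X k)) n
        have hbnd := step_bnd p F z hz0 iU (X k) _ hM
        rw [← hpInvdef] at hbnd
        have hmaxle : max (Valued.v (((X k).coeff 0 : OK F) : F))
            (pInv * (⨆ n, tcNorm p F (X k) (n+1))) ≤ pInv ^ (k+1) := by
          apply max_le
          · exact le_trans (H k) (by
              calc pInv * (⨆ n, tcNorm p F (X k) (n+1)) ≤ pInv * pInv ^ k :=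
                    mul_le_mul' le_rfl hMle
                _ = pInv ^ (k+1) := (pow_succ' pInv k).symm)
          · calc pInv * (⨆ n, tcNorm p F (X k) (n+1)) ≤ pInv * pInv ^ k :=
                  mul_le_mul' le_rfl hMle
              _ = pInv ^ (k+1) := (pow_succ' pInv k).symm
        rw [hXsucc]
        rw [tcNorm_le_iff]
        exact le_trans (hbnd n) (pow_le_pow_left' hmaxle _)
    -- coordinatewise valuation bounds of X k
    have hXcoeff : ∀ k j, Valued.v (((X k).coeff j : OK F) : F) ≤ pInv ^ k := by
      intro k j
      have := (tcNorm_le_iff p F (X k) j (pInv ^ k)).mp (hdecay k j)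
      exact le_trans this (pow_shrink (pow_le_one₀ zero_le hpInv_le1)
        (Nat.one_le_pow _ _ (Fact.out (p := p.Prime)).pos))
    -- coordinatewise bounds on the increments of Q
    have hBk : ∀ k j, Valued.v (((iU * shiftRoot p F (X k)).coeff j : OK F) : F) ≤ pInv ^ k := by
      intro k j
      have h1 : Bnd p F (iU * shiftRoot p F (X k)) (1 * pInv ^ k) :=
        Bnd.mul p F (Bnd_one p F iU) (Bnd_shiftRoot p F (X k) (pInv ^ k)
          (fun n => hdecay k (n+1)))
      rw [one_mul] at h1
      exact le_trans (h1 j) (pow_shrink (pow_le_one₀ zero_le hpInv_le1)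
        (Nat.one_le_pow _ _ (Fact.out (p := p.Prime)).pos))
    have hQsucc : ∀ k, Q (k+1) = Q k + iU * shiftRoot p F (X k) := fun k => rfl
    have hQdiff : ∀ k j, Valued.v ((((Q (k+1)).coeff j : OK F) : F)
        - (((Q k).coeff j : OK F) : F)) ≤ pInv ^ k := by
      intro k j
      have hmem := peval_sub_mem p F (wittAdd p j) (Q k) (iU * shiftRoot p F (X k)) (Q k) 0
        (pInv ^ k) (fun j2 => by simp [Ideal.zero_mem]) (fun j2 => by
          rw [zero_coeff, sub_zero]
          exact (mem_smallIdeal_iff F).mpr (hBk k j2))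
      rw [← add_coeff, ← add_coeff, add_zero] at hmem
      have h2 := (mem_smallIdeal_iff F).mp hmem
      rw [hQsucc k]
      have hcoe : (((Q k + iU * shiftRoot p F (X k)).coeff j - (Q k).coeff j : OK F) : F)
          = (((Q k + iU * shiftRoot p F (X k)).coeff j : OK F) : F)
            - (((Q k).coeff j : OK F) : F) := by push_cast; ring
      rw [hcoe] at h2
      exact h2
    have hQdiff2 : ∀ k l j, k ≤ l → Valued.v ((((Q l).coeff j : OK F) : F)
        - (((Q k).coeff j : OK F) : F)) ≤ pInv ^ k := by
      intro k l j hkl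
      induction l with
      | zero =>
        have hk0 : k = 0 := Nat.le_zero.mp hkl
        subst hk0
        simp
      | succ l ihl =>
        rcases eq_or_lt_of_le hkl with heq | hlt
        · rw [heq]; simp
        · have hkle : k ≤ l := Nat.lt_succ_iff.mp hlt
          have h1 := ihl hkle
          have h2 := hQdiff l j
          have hrw : (((Q (l+1)).coeff j : OK F) : F) - (((Q k).coeff j : OK F) : F)
              = ((((Q (l+1)).coeff j : OK F) : F) - (((Q l).coeff j : OK F) : F))
                + ((((Q l).coeff j : OK F) : F) - (((Q k).coeff j : OK F) : F)) := by ring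
          rw [hrw]
          refine le_trans (Valued.v.map_add _ _) (max_le (le_trans h2 ?_) h1)
          exact pow_le_pow_of_le_one zero_le hpInv_le1 hkle
    -- limits of the coefficients of Q
    have hlim : ∀ j, ∃ L : F, ∀ k, Valued.v (L - (((Q k).coeff j : OK F) : F)) ≤ pInv ^ k := by
      intro j
      have hcauchy : CauchySeq (fun k => (((Q k).coeff j : OK F) : F)) := by
        rw [(Valued.hasBasis_uniformity F ℝ≥0).cauchySeq_iff]
        intro γ _
        have hγpos : 0 < MonoidWithZeroHom.ValueGroup₀.embedding γ.1 := pos_iff_ne_zero.mpr (by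
          intro h0; apply γ.ne_zero; apply MonoidWithZeroHom.ValueGroup₀.embedding_injective
          rw [h0, map_zero])
        obtain ⟨N, hN⟩ := hsmallpow _ hγpos
        refine ⟨N, fun m hm n hn => ?_⟩
        simp only [Set.mem_setOf_eq]
        rw [Valuation.restrict_lt_iff_lt_embedding]
        have hrw : (((Q n).coeff j : OK F) : F) - (((Q m).coeff j : OK F) : F)
            = ((((Q n).coeff j : OK F) : F) - (((Q N).coeff j : OK F) : F))
              - ((((Q m).coeff j : OK F) : F) - (((Q N).coeff j : OK F) : F)) := by ring
        rw [hrw]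
        refine lt_of_le_of_lt (le_trans (Valuation.map_sub _ _ _)
          (max_le (hQdiff2 N n j hn) (hQdiff2 N m j hm))) hN
      obtain ⟨L, hL⟩ := cauchySeq_tendsto_of_complete hcauchy
      refine ⟨L, fun k => ?_⟩
      by_contra hgt
      push_neg at hgt
      obtain ⟨γ0, hγ1, hγ2⟩ := exists_between hgt
      have hγpos : γ0 ≠ 0 := ne_of_gt (lt_of_le_of_lt zero_le hγ1)
      have hmemnhds : {y : F | Valued.v (y - L) < γ0} ∈ nhds L := by
        rw [Valued.mem_nhds]
        obtain ⟨N, hN⟩ := hsmallpow γ0 (pos_iff_ne_zero.mpr hγpos)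
        have hva : Valued.v (((z.coeff 0 : OK F) : F) ^ N) = pInv ^ N := by
          rw [Valuation.map_pow, hz0]
        have hne : Valued.v.restrict (((z.coeff 0 : OK F) : F) ^ N) ≠ 0 := by
          intro h0
          have := congrArg MonoidWithZeroHom.ValueGroup₀.embedding h0
          rw [Valuation.embedding_restrict, map_zero, hva] at this
          exact (pow_pos hpInv_pos N).ne' this
        refine ⟨Units.mk0 _ hne, fun y hy => ?_⟩
        have hy' := (Valued.v.restrict_lt_iff_lt_embedding).mp
          (show Valued.v.restrict (y - L) < (Units.mk0 _ hne).1 from hy)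
        simp only [Units.val_mk0, Valuation.embedding_restrict, hva] at hy'
        exact lt_trans hy' hN
      have hev := hL.eventually (by exact hmemnhds)
      obtain ⟨l, hl1, hl2⟩ := (hev.and (Filter.eventually_ge_atTop k)).exists
      have hrw : L - (((Q k).coeff j : OK F) : F)
          = (L - (((Q l).coeff j : OK F) : F))
            + ((((Q l).coeff j : OK F) : F) - (((Q k).coeff j : OK F) : F)) := by ring
      have hineq : Valued.v (L - (((Q k).coeff j : OK F) : F)) ≤ max γ0 (pInv ^ k) := by
        rw [hrw]
        refine le_trans (Valued.v.map_add _ _) (max_le ?_ ?_)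
        · refine le_trans ?_ (le_max_left γ0 (pInv ^ k))
          have hlv : Valued.v ((((Q l).coeff j : OK F) : F) - L) < γ0 := hl1
          rw [← Valuation.map_neg]
          simpa [neg_sub] using le_of_lt hlv
        · exact le_trans (hQdiff2 k l j hl2) (le_max_right γ0 (pInv ^ k))
      have hlt2 : max γ0 (pInv ^ k) < Valued.v (L - (((Q k).coeff j : OK F) : F)) :=
        max_lt hγ2 hgt
      exact absurd hineq (not_le.mpr hlt2)
    choose L hL using hlim
    have hLO : ∀ j, Valued.v (L j) ≤ 1 := by
      intro j
      have h0 := hL j 0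
      have : (((Q 0).coeff j : OK F) : F) = 0 := by
        rw [hQdef]
        show (((Qseq p F z iU x 0).coeff j : OK F) : F) = 0
        rw [show Qseq p F z iU x 0 = 0 from rfl, zero_coeff]
        exact ZeroMemClass.coe_zero _
      rw [this, sub_zero, pow_zero] at h0
      exact h0
    set q : WittVector p (OK F) := WittVector.mk p (fun j => ⟨L j, hLO j⟩) with hqdef
    refine ⟨0, ?_, ?_⟩
    · intro n hn
      unfold tcNorm
      rw [zero_coeff, zero_coeff]
      simp only [ZeroMemClass.coe_zero, Valuation.map_zero]
      have he : (((p:ℝ))⁻¹ ^ n : ℝ) ≠ 0 := by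
        apply pow_ne_zero
        rw [ne_eq, inv_eq_zero]
        exact_mod_cast (Fact.out (p := p.Prime)).ne_zero
      rw [NNReal.zero_rpow he]
      exact zero_le
    · rw [sub_zero]
      refine ⟨q, ?_⟩
      apply WittVector.ext
      intro j
      have hval : ∀ k : ℕ, Valued.v (((x.coeff j : OK F) : F)
          - (((z * q).coeff j : OK F) : F)) ≤ pInv ^ k := by
        intro k
        -- step 1: (z*q).coeff j close to (z * Q k).coeff j
        have hmem1 := peval_sub_mem p F (wittMul p j) z q z (Q k) (pInv ^ k)
          (fun j2 => by simp [Ideal.zero_mem]) (fun j2 => by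
            apply (mem_smallIdeal_iff F).mpr
            have hcoe : ((q.coeff j2 - (Q k).coeff j2 : OK F) : F)
                = L j2 - (((Q k).coeff j2 : OK F) : F) := by
              rw [hqdef]
              push_cast
              rfl
            rw [hcoe]
            exact hL j2 k)
        rw [← mul_coeff, ← mul_coeff] at hmem1
        have h1 := (mem_smallIdeal_iff F).mp hmem1
        -- step 2: z * Q k = x - X k
        have h2 : (z * Q k).coeff j = (x - X k).coeff j := by rw [← hXQ k]
        -- step 3: (x - X k).coeff j close to x.coeff j
        have hmem3 := peval_sub_mem p F (wittSub p j) x (X k) x 0 (pInv ^ k)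
          (fun j2 => by simp [Ideal.zero_mem]) (fun j2 => by
            rw [zero_coeff, sub_zero]
            exact (mem_smallIdeal_iff F).mpr (hXcoeff k j2))
        rw [← sub_coeff, ← sub_coeff, sub_zero] at hmem3
        have h3 := (mem_smallIdeal_iff F).mp hmem3
        -- combine
        have h1' : Valued.v ((((z * q).coeff j : OK F) : F)
            - (((z * Q k).coeff j : OK F) : F)) ≤ pInv ^ k := by
          have hcoe : (((z * q).coeff j - (z * Q k).coeff j : OK F) : F)
              = (((z * q).coeff j : OK F) : F) - (((z * Q k).coeff j : OK F) : F) := by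
            push_cast; ring
          rw [← hcoe]; exact h1
        have h3' : Valued.v ((((x - X k).coeff j : OK F) : F)
            - ((x.coeff j : OK F) : F)) ≤ pInv ^ k := by
          have hcoe : (((x - X k).coeff j - x.coeff j : OK F) : F)
              = (((x - X k).coeff j : OK F) : F) - ((x.coeff j : OK F) : F) := by
            push_cast; ring
          rw [← hcoe]; exact h3
        have hBC : (((z * Q k).coeff j : OK F) : F) = (((x - X k).coeff j : OK F) : F) := by
          rw [h2]
        have hrw : ((x.coeff j : OK F) : F) - (((z * q).coeff j : OK F) : F)
            = -(((((z * q).coeff j : OK F) : F) - (((z * Q k).coeff j : OK F) : F))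
              + ((((x - X k).coeff j : OK F) : F) - ((x.coeff j : OK F) : F))) := by
          rw [hBC]; ring
        rw [hrw, Valuation.map_neg]
        exact le_trans (Valued.v.map_add _ _) (max_le h1' h3')
      -- conclude: the difference has valuation 0, hence vanishes
      have hval0 : Valued.v (((x.coeff j : OK F) : F) - (((z * q).coeff j : OK F) : F)) = 0 := by
        by_contra hne
        have hpos : 0 < Valued.v (((x.coeff j : OK F) : F) - (((z * q).coeff j : OK F) : F)) :=
          pos_iff_ne_zero.mpr hne
        obtain ⟨N, hN⟩ := hsmallpow _ hpos
        exact absurd (hval N) (not_le.mpr hN)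
      have hzero : ((x.coeff j : OK F) : F) - (((z * q).coeff j : OK F) : F) = 0 :=
        (Valuation.zero_iff Valued.v).mp hval0
      apply Subtype.coe_injective
      exact sub_eq_zero.mp hzero
end

section
/- Let F be a perfect analytic field of characteristic p. Any stable element of W(o_F) divisible by a primitive element of W(o_F) must equal 0. -/
open scoped NNReal ENNReal

set_option synthInstance.maxHeartbeats 1000000
set_option maxHeartbeats 1000000

namespace StableAux

open MvPolynomial Finset WittVector

variable {ι R : Type*}

theorem isWH_congr [CommSemiring R] {w : ι → ℕ} {f : MvPolynomial ι R} {d d' : ℕ}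
    (hf : f.IsWeightedHomogeneous w d) (h : d = d') : f.IsWeightedHomogeneous w d' := h ▸ hf

theorem isWH_pow [CommSemiring R] {w : ι → ℕ} {f : MvPolynomial ι R} {d : ℕ}
    (hf : f.IsWeightedHomogeneous w d) (k : ℕ) : (f ^ k).IsWeightedHomogeneous w (k * d) := by
  induction k with
  | zero => simpa using isWeightedHomogeneous_one R w
  | succ k ih =>
      rw [pow_succ, Nat.succ_mul]
      exact ih.mul hf

theorem isWH_scale [CommSemiring R] {w : ι → ℕ} {f : MvPolynomial ι R} {d : ℕ} (c : ℕ)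
    (hf : f.IsWeightedHomogeneous w d) :
    f.IsWeightedHomogeneous (fun i => c * w i) (c * d) := by
  intro u hu
  have h := hf hu
  rw [Finsupp.weight_apply] at h ⊢
  simp only [Finsupp.sum, smul_eq_mul] at h ⊢
  rw [← h, Finset.mul_sum]
  exact Finset.sum_congr rfl fun i _ => by ring

theorem isWH_sub {w : ι → ℕ} [CommRing R] {f g : MvPolynomial ι R} {d : ℕ}
    (hf : f.IsWeightedHomogeneous w d) (hg : g.IsWeightedHomogeneous w d) :
    (f - g).IsWeightedHomogeneous w d := by
  intro u hu
  rw [coeff_sub] at hu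
  by_cases h : coeff u f = 0
  · exact hg fun h' => hu (by rw [h, h', sub_zero])
  · exact hf h

theorem isWH_rename {τ : Type*} [CommSemiring R] {w' : τ → ℕ} (f : ι → τ)
    {φ : MvPolynomial ι R} {d : ℕ} (h : φ.IsWeightedHomogeneous (fun i => w' (f i)) d) :
    (rename f φ).IsWeightedHomogeneous w' d := by
  intro u hu
  obtain ⟨u', rfl, hc⟩ := coeff_rename_ne_zero f φ u hu
  have h2 := h hc
  rw [Finsupp.weight_apply] at h2 ⊢
  rw [Finsupp.sum_mapDomain_index (fun b => by simp) (fun b m₁ m₂ => add_smul m₁ m₂ (w' b))]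
  exact h2

theorem isWH_bind₁ {τ : Type*} [CommSemiring R] {w : ι → ℕ} {w' : τ → ℕ}
    {f : MvPolynomial ι R} {g : ι → MvPolynomial τ R} {d : ℕ} (c : ℕ)
    (hf : f.IsWeightedHomogeneous w d)
    (hg : ∀ b, (g b).IsWeightedHomogeneous w' (w b * c)) :
    (bind₁ g f).IsWeightedHomogeneous w' (d * c) := by
  rw [bind₁, aeval_def, eval₂_eq]
  apply IsWeightedHomogeneous.sum
  intro u hu
  have hC : ((algebraMap R (MvPolynomial τ R)) (coeff u f)) = C (coeff u f) := rfl
  rw [hC]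
  have hprod := IsWeightedHomogeneous.prod u.support (fun i => g i ^ u i)
    (fun i => u i * (w i * c)) (fun i _ => isWH_pow (hg i) (u i))
  have hdeg : (0 : ℕ) + ∑ i ∈ u.support, u i * (w i * c) = d * c := by
    rw [zero_add]
    have h2 := hf (MvPolynomial.mem_support_iff.mp hu)
    rw [Finsupp.weight_apply] at h2
    simp only [Finsupp.sum, smul_eq_mul] at h2
    rw [← h2, Finset.sum_mul]
    exact Finset.sum_congr rfl fun i _ => by ring
  exact isWH_congr ((isWeightedHomogeneous_C w' (coeff u f)).mul hprod) hdeg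

theorem isWH_wittPolynomial (p n : ℕ) :
    (wittPolynomial p ℚ n).IsWeightedHomogeneous (fun i => p ^ i) (p ^ n) := by
  rw [wittPolynomial]
  apply IsWeightedHomogeneous.sum
  intro i hi
  apply isWeightedHomogeneous_monomial
  rw [Finsupp.weight_apply, Finsupp.sum_single_index (by simp), smul_eq_mul, ← pow_add,
    Nat.sub_add_cancel (Nat.lt_succ_iff.mp (Finset.mem_range.mp hi))]

theorem isWH_wittStructureRat {p : ℕ} [hp : Fact p.Prime] (Φ : MvPolynomial ι ℚ) (w : ι → ℕ)
    (d : ℕ) (hΦ : Φ.IsWeightedHomogeneous w d) (n : ℕ) :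
    (wittStructureRat p Φ n).IsWeightedHomogeneous (fun bi => w bi.1 * p ^ bi.2) (d * p ^ n) := by
  induction n using Nat.strong_induction_on with
  | _ n ih =>
  rw [wittStructureRat_rec]
  refine isWH_congr ((isWeightedHomogeneous_C _ _).mul (isWH_sub ?_ ?_)) (zero_add _)
  · refine isWH_bind₁ (w := w) (p ^ n) hΦ ?_
    intro b
    apply isWH_rename
    exact isWH_scale (w b) (isWH_wittPolynomial p n)
  · apply IsWeightedHomogeneous.sum
    intro i hi
    have hi' : i < n := Finset.mem_range.mp hi
    refine isWH_congr ((isWeightedHomogeneous_C _ _).mul (isWH_pow (ih i hi') (p ^ (n - i)))) ?_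
    rw [zero_add]
    calc p ^ (n - i) * (d * p ^ i) = d * (p ^ (n - i) * p ^ i) := by ring
    _ = d * p ^ n := by rw [← pow_add, Nat.sub_add_cancel hi'.le]

theorem isWH_wittStructureInt {p : ℕ} [hp : Fact p.Prime] (Φ : MvPolynomial ι ℤ) (w : ι → ℕ)
    (d : ℕ) (hΦ : Φ.IsWeightedHomogeneous w d) (n : ℕ) :
    (wittStructureInt p Φ n).IsWeightedHomogeneous (fun bi => w bi.1 * p ^ bi.2) (d * p ^ n) := by
  have hΦ' : (map (Int.castRingHom ℚ) Φ).IsWeightedHomogeneous w d := by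
    intro u hu
    refine hΦ fun h => hu ?_
    rw [coeff_map, h]
    simp
  intro u hu
  have h2 : coeff u (wittStructureRat p (map (Int.castRingHom ℚ) Φ) n) ≠ 0 := by
    rw [← map_wittStructureInt, coeff_map]
    refine fun h => hu ?_
    have h2 : ((coeff u (wittStructureInt p Φ n) : ℤ) : ℚ) = 0 := by simpa using h
    exact_mod_cast h2
  exact isWH_wittStructureRat _ w d hΦ' n h2

theorem isWH_wittAdd (p : ℕ) [Fact p.Prime] (n : ℕ) :
    (wittAdd p n).IsWeightedHomogeneous (fun bi : Fin 2 × ℕ => p ^ bi.2) (p ^ n) := by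
  have h := isWH_wittStructureInt (p := p) (X (0 : Fin 2) + X 1) (fun _ => 1) 1
    (isWH_congr ((isWeightedHomogeneous_X ℤ _ 0).add (isWeightedHomogeneous_X ℤ _ 1)) rfl) n
  simpa [wittAdd] using h

theorem isWH_neg {w : ι → ℕ} [CommRing R] {f : MvPolynomial ι R} {d : ℕ}
    (hf : f.IsWeightedHomogeneous w d) : (-f).IsWeightedHomogeneous w d := by
  intro u hu
  exact hf fun h => hu (by rw [coeff_neg, h, neg_zero])

theorem isWH_wittNeg (p : ℕ) [Fact p.Prime] (n : ℕ) :
    (wittNeg p n).IsWeightedHomogeneous (fun bi : Fin 1 × ℕ => p ^ bi.2) (p ^ n) := by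
  have h := isWH_wittStructureInt (p := p) (-X (0 : Fin 1)) (fun _ => 1) 1
    (isWH_neg (isWeightedHomogeneous_X ℤ _ 0)) n
  simpa [wittNeg] using h

theorem isWH_wittMul (p : ℕ) [Fact p.Prime] (n : ℕ) (b : Fin 2) :
    (wittMul p n).IsWeightedHomogeneous
      (fun bi : Fin 2 × ℕ => (if bi.1 = b then 1 else 0) * p ^ bi.2) (p ^ n) := by
  have hX : (X (0 : Fin 2) * X 1 : MvPolynomial (Fin 2) ℤ).IsWeightedHomogeneous
      (fun c => if c = b then 1 else 0) 1 := by
    refine isWH_congr ((isWeightedHomogeneous_X ℤ _ 0).mul (isWeightedHomogeneous_X ℤ _ 1)) ?_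
    fin_cases b <;> simp
  have h := isWH_wittStructureInt (p := p) (X (0 : Fin 2) * X 1) _ 1 hX n
  simpa [wittMul] using h

end StableAux



namespace StableAux

open MvPolynomial WittVector Finset

variable {p : ℕ} [hp : Fact p.Prime]

/-- Over a ring in which `p` is invertible, every Witt vector splits as its Teichmüller head
plus the Verschiebung of its shift. -/
theorem teich_split_of_invertible {S : Type*} [CommRing S] [Invertible (p : S)]
    (y : WittVector p S) :
    teichmuller p (y.coeff 0) + verschiebung (y.shift 1) = y := by
  apply (WittVector.ghostMap.bijective_of_invertible p S).1
  funext n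
  rw [map_add]
  show WittVector.ghostMap _ n + WittVector.ghostMap _ n = WittVector.ghostMap y n
  rw [ghostMap_apply, ghostMap_apply, ghostMap_apply,
    ghostComponent_apply, ghostComponent_apply, ghostComponent_apply,
    aeval_wittPolynomial, aeval_wittPolynomial, aeval_wittPolynomial]
  cases n with
  | zero =>
      simp [teichmuller_coeff_zero, verschiebung_coeff_zero]
  | succ n =>
      -- LHS first sum: only the `i = 0` term survives
      have h1 : ∑ i ∈ range (n + 2), (p : S) ^ i * (teichmuller p (y.coeff 0)).coeff i
          ^ p ^ (n + 1 - i) = y.coeff 0 ^ p ^ (n + 1) := by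
        rw [Finset.sum_eq_single 0]
        · simp [teichmuller_coeff_zero]
        · intro i _ hi
          rw [teichmuller_coeff_pos _ _ i (Nat.pos_of_ne_zero hi)]
          rw [zero_pow (pow_ne_zero _ hp.out.ne_zero), mul_zero]
        · simp
      rw [h1]
      -- second sum: Verschiebung shifts
      have h2 : ∑ i ∈ range (n + 2), (p : S) ^ i * (verschiebung (y.shift 1)).coeff i
          ^ p ^ (n + 1 - i) = ∑ i ∈ range (n + 1), (p : S) ^ (i + 1) * y.coeff (i + 1)
          ^ p ^ (n - i) := by
        rw [Finset.sum_range_succ']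
        rw [verschiebung_coeff_zero]
        rw [zero_pow (pow_ne_zero _ hp.out.ne_zero), mul_zero, add_zero]
        apply Finset.sum_congr rfl
        intro i _
        rw [verschiebung_coeff_succ, shift_coeff, Nat.succ_sub_succ, Nat.add_comm 1 i]
      rw [h2]
      -- RHS: peel off the `i = 0` term
      conv_rhs => rw [Finset.sum_range_succ']
      simp only [pow_zero, mul_one, one_mul, Nat.sub_zero, Nat.succ_sub_succ]
      rw [add_comm]

end StableAux

namespace StableAux

open MvPolynomial WittVector

variable {p : ℕ} [hp : Fact p.Prime]

theorem map_shift {R S : Type*} [CommRing R] [CommRing S] (f : R →+* S) (x : WittVector p R)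
    (n : ℕ) : WittVector.map f (x.shift n) = (WittVector.map f x).shift n := by
  ext i
  simp [WittVector.map_coeff, WittVector.shift_coeff]

/-- Every Witt vector splits as its Teichmüller head plus the Verschiebung of its shift. -/
theorem teich_split {R : Type*} [CommRing R] (x : WittVector p R) :
    teichmuller p (x.coeff 0) + verschiebung (x.shift 1) = x := by
  let f : MvPolynomial ℕ ℤ →+* R := (MvPolynomial.aeval x.coeff).toRingHom
  let Y : WittVector p (MvPolynomial ℕ ℤ) := WittVector.mk p fun n => X n
  have hY : WittVector.map f Y = x := by
    ext n
    rw [WittVector.map_coeff]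
    exact MvPolynomial.aeval_X x.coeff n
  have key : teichmuller p (Y.coeff 0) + verschiebung (Y.shift 1) = Y := by
    apply WittVector.map_injective (MvPolynomial.map (Int.castRingHom ℚ))
      (MvPolynomial.map_injective _ Int.cast_injective)
    letI : Invertible (p : ℚ) := invertibleOfNonzero (by exact_mod_cast hp.out.ne_zero)
    rw [map_add, map_teichmuller, map_verschiebung, map_shift, ← WittVector.map_coeff]
    exact teich_split_of_invertible _
  calc teichmuller p (x.coeff 0) + verschiebung (x.shift 1)
      = WittVector.map f (teichmuller p (Y.coeff 0) + verschiebung (Y.shift 1)) := by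
        rw [map_add, map_teichmuller, map_verschiebung, map_shift, hY,
          ← WittVector.map_coeff, hY]
    _ = x := by rw [key, hY]

end StableAux





namespace StableAux

open MvPolynomial WittVector Finset


section Analytic

variable (p : ℕ) [hp : Fact p.Prime] (F : Type*) [Field F] [Valued F ℝ≥0]

theorem v_le_one (a : OK F) : Valued.v (a : F) ≤ 1 := a.2

theorem v_intCast_le_one (k : ℤ) : Valued.v ((k : F)) ≤ 1 := by
  have : ((k : F)) = (((k : OK F)) : F) := by push_cast; rfl
  rw [this]
  exact v_le_one F _

/-- The key evaluation bound: an integral polynomial which is weighted-homogeneous with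
respect to two weights, evaluated at elements with suitably bounded valuations. -/
theorem aeval_v_le {σ : Type*} (f : MvPolynomial σ ℤ) {w₁ w₂ : σ → ℕ} {d₁ d₂ : ℕ}
    (h₁ : f.IsWeightedHomogeneous w₁ d₁) (h₂ : f.IsWeightedHomogeneous w₂ d₂)
    (c : σ → OK F) (B₁ B₂ : ℝ≥0)
    (hc : ∀ s, Valued.v ((c s : F)) ≤ B₁ ^ (w₁ s) * B₂ ^ (w₂ s)) :
    Valued.v ((aeval c f : OK F) : F) ≤ B₁ ^ d₁ * B₂ ^ d₂ := by
  rw [aeval_def]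
  have hcast : (((eval₂ (algebraMap ℤ (OK F)) c f : OK F)) : F) =
      ∑ u ∈ f.support, (((coeff u f : ℤ)) : F) * ∏ i ∈ u.support, ((c i : F)) ^ u i := by
    rw [eval₂_eq]
    push_cast
    rfl
  rw [hcast]
  apply Valuation.map_sum_le
  intro u hu
  rw [map_mul]
  have hd₁ : ∑ i ∈ u.support, w₁ i * u i = d₁ := by
    have h := h₁ (MvPolynomial.mem_support_iff.mp hu)
    rw [Finsupp.weight_apply] at h
    simp only [Finsupp.sum, smul_eq_mul] at h
    rw [← h]
    exact Finset.sum_congr rfl fun i _ => by ring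
  have hd₂ : ∑ i ∈ u.support, w₂ i * u i = d₂ := by
    have h := h₂ (MvPolynomial.mem_support_iff.mp hu)
    rw [Finsupp.weight_apply] at h
    simp only [Finsupp.sum, smul_eq_mul] at h
    rw [← h]
    exact Finset.sum_congr rfl fun i _ => by ring
  have hprod : Valued.v (∏ i ∈ u.support, ((c i : F)) ^ u i) ≤ B₁ ^ d₁ * B₂ ^ d₂ := by
    rw [map_prod]
    calc ∏ i ∈ u.support, Valued.v (((c i : F)) ^ u i)
        ≤ ∏ i ∈ u.support, (B₁ ^ (w₁ i) * B₂ ^ (w₂ i)) ^ u i := by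
          apply Finset.prod_le_prod'
          intro i _
          rw [map_pow]
          exact pow_le_pow_left₀ zero_le (hc i) _
      _ = (∏ i ∈ u.support, B₁ ^ (w₁ i * u i)) * (∏ i ∈ u.support, B₂ ^ (w₂ i * u i)) := by
          rw [← Finset.prod_mul_distrib]
          exact Finset.prod_congr rfl fun i _ => by rw [mul_pow, pow_mul, pow_mul]
      _ = B₁ ^ d₁ * B₂ ^ d₂ := by
          rw [Finset.prod_pow_eq_pow_sum, Finset.prod_pow_eq_pow_sum, hd₁, hd₂]
  calc Valued.v ((((coeff u f : ℤ)) : F)) * Valued.v (∏ i ∈ u.support, ((c i : F)) ^ u i)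
      ≤ 1 * (B₁ ^ d₁ * B₂ ^ d₂) := mul_le_mul' (v_intCast_le_one F _) hprod
    _ = B₁ ^ d₁ * B₂ ^ d₂ := one_mul _

theorem isWH_zeroWeight {σ : Type*} (f : MvPolynomial σ ℤ) :
    f.IsWeightedHomogeneous (fun _ => 0) 0 := by
  intro u _
  rw [Finsupp.weight_apply]
  simp [Finsupp.sum]

theorem aeval_v_le₁ {σ : Type*} (f : MvPolynomial σ ℤ) {w₁ : σ → ℕ} {d₁ : ℕ}
    (h₁ : f.IsWeightedHomogeneous w₁ d₁) (c : σ → OK F) (B₁ : ℝ≥0)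
    (hc : ∀ s, Valued.v ((c s : F)) ≤ B₁ ^ (w₁ s)) :
    Valued.v ((aeval c f : OK F) : F) ≤ B₁ ^ d₁ := by
  have := aeval_v_le F f h₁ (isWH_zeroWeight f) c B₁ 1 (fun s => by simpa using hc s)
  simpa using this

/-- The Gauss norm `λ(x) = sup_n |x̄_n|'`. -/
noncomputable def lam (x : WittVector p (OK F)) : ℝ≥0 := ⨆ n, tcNorm p F x n

variable {F}

theorem tcNorm_le_one (x : WittVector p (OK F)) (n : ℕ) : tcNorm p F x n ≤ 1 :=
  NNReal.rpow_le_one (v_le_one F _) (by positivity)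

theorem le_lam (x : WittVector p (OK F)) (n : ℕ) : tcNorm p F x n ≤ lam p F x :=
  le_ciSup ⟨1, by rintro _ ⟨n, rfl⟩; exact tcNorm_le_one p x n⟩ n

theorem lam_le {x : WittVector p (OK F)} {B : ℝ≥0} (h : ∀ n, tcNorm p F x n ≤ B) :
    lam p F x ≤ B := ciSup_le h

theorem lam_le_one (x : WittVector p (OK F)) : lam p F x ≤ 1 := lam_le p fun n => tcNorm_le_one p x n

theorem hp0 : ((p : ℝ)) ≠ 0 := Nat.cast_ne_zero.mpr hp.out.ne_zero

theorem coe_pow_cancel (n : ℕ) : ((p:ℝ)⁻¹ ^ n) * (((p ^ n : ℕ)) : ℝ) = 1 := by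
  push_cast
  rw [← mul_pow, inv_mul_cancel₀ (hp0 p), one_pow]

theorem tcNorm_pow (x : WittVector p (OK F)) (n : ℕ) :
    tcNorm p F x n ^ (p ^ n) = Valued.v ((x.coeff n : OK F) : F) := by
  calc tcNorm p F x n ^ (p ^ n) = tcNorm p F x n ^ ((((p ^ n : ℕ)) : ℝ)) :=
        (NNReal.rpow_natCast _ _).symm
    _ = Valued.v ((x.coeff n : OK F) : F) ^ (((p:ℝ)⁻¹ ^ n) * (((p ^ n : ℕ)) : ℝ)) := by
        rw [NNReal.rpow_mul]; rfl
    _ = _ := by rw [coe_pow_cancel, NNReal.rpow_one]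

theorem v_coeff_le {x : WittVector p (OK F)} {B : ℝ≥0} {n : ℕ} (h : tcNorm p F x n ≤ B) :
    Valued.v ((x.coeff n : OK F) : F) ≤ B ^ (p ^ n) := by
  rw [← tcNorm_pow]
  exact pow_le_pow_left₀ zero_le h _

theorem v_coeff_le_lam (x : WittVector p (OK F)) (n : ℕ) :
    Valued.v ((x.coeff n : OK F) : F) ≤ (lam p F x) ^ (p ^ n) :=
  v_coeff_le p (le_lam p x n)

theorem tcNorm_le_of {x : WittVector p (OK F)} {B : ℝ≥0} {n : ℕ}
    (h : Valued.v ((x.coeff n : OK F) : F) ≤ B ^ (p ^ n)) : tcNorm p F x n ≤ B := by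
  have h2 := NNReal.rpow_le_rpow h (by positivity : (0:ℝ) ≤ (p:ℝ)⁻¹ ^ n)
  rw [← NNReal.rpow_natCast B (p ^ n), ← NNReal.rpow_mul, mul_comm, coe_pow_cancel,
    NNReal.rpow_one] at h2
  exact h2

theorem tcNorm_zero_eq (x : WittVector p (OK F)) :
    tcNorm p F x 0 = Valued.v ((x.coeff 0 : OK F) : F) := by
  rw [tcNorm, pow_zero, NNReal.rpow_one]

theorem lam_eq_zero {x : WittVector p (OK F)} (h : lam p F x = 0) : x = 0 := by
  ext n
  have h1 : tcNorm p F x n = 0 := le_antisymm (h ▸ le_lam p x n) zero_le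
  have h2 : Valued.v ((x.coeff n : OK F) : F) = 0 := by
    rw [← tcNorm_pow, h1, zero_pow (pow_ne_zero n hp.out.ne_zero)]
  have h3 : ((x.coeff n : OK F) : F) = 0 := (Valuation.zero_iff _).mp h2
  simpa using Subtype.ext h3

theorem lam_add_le (x y : WittVector p (OK F)) :
    lam p F (x + y) ≤ max (lam p F x) (lam p F y) := by
  apply lam_le
  intro n
  apply tcNorm_le_of
  rw [add_coeff]
  show Valued.v ((aeval (Function.uncurry ![x.coeff, y.coeff]) (wittAdd p n) : OK F) : F) ≤ _
  apply aeval_v_le₁ F (wittAdd p n) (isWH_wittAdd p n)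
  rintro ⟨b, i⟩
  fin_cases b
  · show Valued.v ((x.coeff i : OK F) : F) ≤ _
    exact le_trans (v_coeff_le_lam p x i) (pow_le_pow_left₀ zero_le (le_max_left _ _) _)
  · show Valued.v ((y.coeff i : OK F) : F) ≤ _
    exact le_trans (v_coeff_le_lam p y i) (pow_le_pow_left₀ zero_le (le_max_right _ _) _)

theorem lam_neg_le (x : WittVector p (OK F)) : lam p F (-x) ≤ lam p F x := by
  apply lam_le
  intro n
  apply tcNorm_le_of
  rw [neg_coeff]
  show Valued.v ((aeval (Function.uncurry ![x.coeff]) (wittNeg p n) : OK F) : F) ≤ _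
  apply aeval_v_le₁ F (wittNeg p n) (isWH_wittNeg p n)
  rintro ⟨b, i⟩
  fin_cases b
  · show Valued.v ((x.coeff i : OK F) : F) ≤ _
    exact v_coeff_le_lam p x i

theorem lam_mul_le (x y : WittVector p (OK F)) :
    lam p F (x * y) ≤ lam p F x * lam p F y := by
  apply lam_le
  intro n
  apply tcNorm_le_of
  rw [mul_coeff, mul_pow]
  show Valued.v ((aeval (Function.uncurry ![x.coeff, y.coeff]) (wittMul p n) : OK F) : F) ≤ _
  apply aeval_v_le F (wittMul p n) (isWH_wittMul p n 0) (isWH_wittMul p n 1)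
  rintro ⟨b, i⟩
  fin_cases b
  · show Valued.v ((x.coeff i : OK F) : F) ≤ _
    simpa [Fin.ext_iff] using v_coeff_le_lam p x i
  · show Valued.v ((y.coeff i : OK F) : F) ≤ _
    simpa [Fin.ext_iff] using v_coeff_le_lam p y i

theorem lam_teichmuller_le (a : OK F) :
    lam p F (teichmuller p a) ≤ Valued.v ((a : OK F) : F) := by
  apply lam_le
  intro n
  cases n with
  | zero => rw [tcNorm_zero_eq, teichmuller_coeff_zero]
  | succ n =>
      rw [tcNorm, teichmuller_coeff_pos p a (n+1) n.succ_pos, ZeroMemClass.coe_zero, map_zero,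
        NNReal.zero_rpow (pow_ne_zero _ (inv_ne_zero (hp0 p)))]
      exact zero_le

end Analytic

end StableAux


namespace StableAux

open WittVector

section CharPpart

variable (p : ℕ) [hp : Fact p.Prime] (F : Type*) [Field F] [Valued F ℝ≥0] [CharP F p]

theorem lam_le_pmul (x : WittVector p (OK F)) :
    lam p F x ≤ lam p F (x * (p : WittVector p (OK F))) := by
  haveI : CharP (OK F) p := CharP.subring' F p (OK F)
  apply lam_le
  intro n
  have key : tcNorm p F x n = tcNorm p F (x * (p : WittVector p (OK F))) (n + 1) := by
    rw [tcNorm, tcNorm, ← verschiebung_frobenius x, verschiebung_coeff_succ,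
      coeff_frobenius_charP]
    rw [show (((x.coeff n ^ p : OK F)) : F) = (((x.coeff n : OK F)) : F) ^ p by push_cast; rfl]
    rw [map_pow, ← NNReal.rpow_natCast (Valued.v ((x.coeff n : OK F) : F)) p, ← NNReal.rpow_mul]
    congr 1
    rw [pow_succ]
    rw [mul_comm ((p:ℝ)⁻¹ ^ n), ← mul_assoc, mul_comm ((p:ℕ):ℝ), inv_mul_cancel₀ (hp0 p),
      one_mul]
  rw [key]
  exact le_lam p _ (n + 1)

end CharPpart

end StableAux

/-- Any stable element of `W(o_F)` divisible by a primitive element must equal `0`. -/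
theorem stable_dvd_primitive_eq_zero (p : ℕ) [Fact p.Prime] (F : Type*) [Field F]
    [Valued F ℝ≥0] [CompleteSpace F] [ExpChar F p] [PerfectRing F p]
    (x z : WittVector p (OK F)) (hx : IsStable p F x) (hz : IsPrimitive p F z)
    (hdvd : z ∣ x) : x = 0 := by
  classical
  have hp : Fact p.Prime := ‹_›
  open StableAux WittVector in
  haveI hcF : CharP F p := by
    rcases ‹ExpChar F p› with _ | h
    · exact absurd hp.out (by norm_num)
    · assumption
  haveI : CharP (OK F) p := CharP.subring' F p (OK F)
  obtain ⟨y, hy⟩ := hdvd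
  -- p-th roots in the valuation ring
  have hrt_le : ∀ a : OK F, Valued.v ((frobeniusEquiv F p).symm (a : F)) ≤ 1 := by
    intro a
    by_contra hgt
    push_neg at hgt
    have h1 : (1:ℝ≥0) < Valued.v ((frobeniusEquiv F p).symm (a : F)) ^ p :=
      one_lt_pow₀ hgt hp.out.ne_zero
    rw [← map_pow, frobeniusEquiv_symm_pow_p] at h1
    exact absurd (v_le_one F a) (not_le.mpr h1)
  let rt : OK F → OK F := fun a => ⟨(frobeniusEquiv F p).symm (a : F), hrt_le a⟩
  have rt_pow : ∀ a : OK F, (rt a) ^ p = a := by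
    intro a
    apply Subtype.ext
    show ((frobeniusEquiv F p).symm (a : F)) ^ p = (a : F)
    exact frobeniusEquiv_symm_pow_p F p (a : F)
  -- the element u with z = [z₀] + u * p
  let u : WittVector p (OK F) := WittVector.mk p fun n => rt (z.coeff (n + 1))
  have hfrob : frobenius u = z.shift 1 := by
    apply WittVector.ext
    intro n
    rw [coeff_frobenius_charP, shift_coeff]
    show (rt (z.coeff (n + 1))) ^ p = z.coeff (1 + n)
    rw [rt_pow, Nat.add_comm 1 n]
  have hsplit : z = teichmuller p (z.coeff 0) + u * p := by
    conv_lhs => rw [← teich_split z]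
    rw [← hfrob, verschiebung_frobenius u]
  -- u is a unit
  have hvu : Valued.v ((u.coeff 0 : OK F) : F) = 1 := by
    have h1 : (u.coeff 0) ^ p = z.coeff 1 := rt_pow _
    have h2 : Valued.v ((u.coeff 0 : OK F) : F) ^ p = 1 := by
      rw [← map_pow, show (((u.coeff 0 : OK F)) : F) ^ p = (((u.coeff 0 ^ p : OK F)) : F) by
        push_cast; rfl, h1, hz.2]
    rcases (v_le_one F (u.coeff 0)).lt_or_eq with hlt | he
    · exact absurd h2 (pow_lt_one₀ zero_le hlt hp.out.ne_zero).ne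
    · exact he
  have hu_unit : IsUnit (u.coeff 0) := by
    apply ((Valuation.integer.integers
      (v := (Valued.v : Valuation F ℝ≥0))).isUnit_iff_valuation_eq_one).mpr
    exact hvu
  let U : (WittVector p (OK F))ˣ := mkUnit (A := u) hu_unit.unit_spec.symm
  have hUu : (U : WittVector p (OK F)) = u := coe_mkUnit _
  set y' : WittVector p (OK F) := u * y with hy'def
  have hyy : y = (↑U⁻¹ : WittVector p (OK F)) * y' := by
    rw [hy'def, ← hUu, ← mul_assoc, Units.inv_mul, one_mul]
  have hLyy' : lam p F y ≤ lam p F y' := by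
    calc lam p F y = lam p F ((↑U⁻¹ : WittVector p (OK F)) * y') := by rw [← hyy]
      _ ≤ lam p F (↑U⁻¹ : WittVector p (OK F)) * lam p F y' := lam_mul_le p _ _
      _ ≤ 1 * lam p F y' := mul_le_mul_left (lam_le_one p _) _
      _ = lam p F y' := one_mul _
  have hstable : lam p F x ≤ Valued.v ((x.coeff 0 : OK F) : F) := by
    apply lam_le
    intro n
    cases n with
    | zero => rw [tcNorm_zero_eq]
    | succ n => exact le_trans (hx (n+1) n.succ_pos) (le_of_eq (tcNorm_zero_eq p x))
  have hLx : lam p F x ≤ (p : ℝ≥0)⁻¹ * lam p F y' := by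
    calc lam p F x ≤ Valued.v ((x.coeff 0 : OK F) : F) := hstable
      _ = Valued.v ((z.coeff 0 : OK F) : F) * Valued.v ((y.coeff 0 : OK F) : F) := by
          rw [hy, mul_coeff_zero,
            show (((z.coeff 0 * y.coeff 0 : OK F)) : F) =
              ((z.coeff 0 : OK F) : F) * ((y.coeff 0 : OK F) : F) by push_cast; rfl, map_mul]
      _ ≤ (p:ℝ≥0)⁻¹ * lam p F y := by
          rw [hz.1]
          apply mul_le_mul_right
          rw [← tcNorm_zero_eq]
          exact le_lam p y 0
      _ ≤ (p:ℝ≥0)⁻¹ * lam p F y' := mul_le_mul_right hLyy' _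
  have hterm : lam p F (-(teichmuller p (z.coeff 0) * y)) ≤ (p:ℝ≥0)⁻¹ * lam p F y' := by
    calc lam p F (-(teichmuller p (z.coeff 0) * y))
        ≤ lam p F (teichmuller p (z.coeff 0) * y) := lam_neg_le p _
      _ ≤ lam p F (teichmuller p (z.coeff 0)) * lam p F y := lam_mul_le p _ _
      _ ≤ (p:ℝ≥0)⁻¹ * lam p F y' := by
          apply mul_le_mul'
          · exact le_trans (lam_teichmuller_le p _) (le_of_eq hz.1)
          · exact hLyy'
  have hx' : y' * (p : WittVector p (OK F)) = x + -(teichmuller p (z.coeff 0) * y) := by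
    have hxe : x = teichmuller p (z.coeff 0) * y + y' * (p : WittVector p (OK F)) := by
      rw [hy]
      conv_lhs => rw [hsplit]
      rw [hy'def]
      ring
    rw [hxe]
    ring
  have hkey : lam p F y' ≤ (p:ℝ≥0)⁻¹ * lam p F y' := by
    calc lam p F y' ≤ lam p F (y' * (p : WittVector p (OK F))) := lam_le_pmul p F y'
      _ = lam p F (x + -(teichmuller p (z.coeff 0) * y)) := by rw [hx']
      _ ≤ max (lam p F x) (lam p F (-(teichmuller p (z.coeff 0) * y))) := lam_add_le p _ _
      _ ≤ (p:ℝ≥0)⁻¹ * lam p F y' := max_le hLx hterm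
  have hzero : lam p F y' = 0 := by
    by_contra h
    have hpos : 0 < lam p F y' := zero_le.lt_of_ne (Ne.symm h)
    have hinv : (p:ℝ≥0)⁻¹ < 1 := by
      rw [inv_lt_one_iff₀]
      right
      exact_mod_cast hp.out.one_lt
    have hlt : (p:ℝ≥0)⁻¹ * lam p F y' < 1 * lam p F y' := mul_lt_mul_of_pos_right hinv hpos
    rw [one_mul] at hlt
    exact absurd hkey (not_le.mpr hlt)
  have hy'0 : y' = 0 := lam_eq_zero p hzero
  have hy0 : y = 0 := by rw [hyy, hy'0, mul_zero]
  rw [hy, hy0, mul_zero]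
end

section
/- Let F be a perfect analytic field of characteristic p, z ∈ W(o_F) primitive, and x, y ∈ W(o_F) stable and congruent modulo z. Then the zeroth Teichmüller coordinates of x and y have the same norm: |x̄_0|' = |ȳ_0|'. -/
open scoped NNReal ENNReal

set_option synthInstance.maxHeartbeats 1000000
set_option maxHeartbeats 1000000
set_option linter.unusedSectionVars false

namespace WittAux
open WittVector
variable {p : ℕ} [hp : Fact p.Prime] {R : Type*} [CommRing R]

noncomputable def shiftW (x : WittVector p R) : WittVector p R :=
  WittVector.mk p fun n => x.coeff (n + 1)

@[simp] lemma shiftW_coeff (x : WittVector p R) (n : ℕ) :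
    (shiftW x).coeff n = x.coeff (n + 1) := rfl

lemma tv_disjoint (a : R) (u : WittVector p R) :
    ∀ n, (teichmuller p a).coeff n = 0 ∨ (verschiebung u).coeff n = 0 := by
  rintro (_ | n)
  · exact Or.inr (verschiebung_coeff_zero u)
  · exact Or.inl (teichmuller_coeff_pos p a _ n.succ_pos)

lemma tv_coeff_zero (a : R) (u : WittVector p R) :
    (teichmuller p a + verschiebung u).coeff 0 = a := by
  rw [coeff_add_of_disjoint _ _ _ (tv_disjoint a u), teichmuller_coeff_zero,
    verschiebung_coeff_zero, add_zero]

lemma tv_coeff_succ (a : R) (u : WittVector p R) (n : ℕ) :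
    (teichmuller p a + verschiebung u).coeff (n + 1) = u.coeff n := by
  rw [coeff_add_of_disjoint _ _ _ (tv_disjoint a u),
    teichmuller_coeff_pos p a _ n.succ_pos, verschiebung_coeff_succ, zero_add]

lemma decomp (x : WittVector p R) :
    teichmuller p (x.coeff 0) + verschiebung (shiftW x) = x := by
  ext n
  cases n with
  | zero => rw [tv_coeff_zero]
  | succ n => rw [tv_coeff_succ, shiftW_coeff]

lemma eq_versch_shiftW (x : WittVector p R) (h : x.coeff 0 = 0) :
    verschiebung (shiftW x) = x := by
  have h2 := decomp x
  rwa [h, teichmuller_zero, zero_add] at h2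

lemma shiftW_versch (u : WittVector p R) : shiftW (verschiebung u) = u := by
  ext n
  rw [shiftW_coeff, verschiebung_coeff_succ]

lemma frobenius_teichmuller [CharP R p] (c : R) :
    frobenius (teichmuller p c) = teichmuller p (c ^ p) := by
  ext n
  cases n with
  | zero => rw [coeff_frobenius_charP, teichmuller_coeff_zero, teichmuller_coeff_zero]
  | succ n =>
      rw [coeff_frobenius_charP, teichmuller_coeff_pos p c _ n.succ_pos,
        teichmuller_coeff_pos p _ _ n.succ_pos, zero_pow hp.out.ne_zero]

lemma teich_mul_versch (c : R) [CharP R p] (u : WittVector p R) :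
    teichmuller p c * verschiebung u = verschiebung (teichmuller p (c ^ p) * u) := by
  rw [mul_comm (teichmuller p (c ^ p)) u, ← frobenius_teichmuller,
    verschiebung_mul_frobenius, mul_comm]

lemma teichmuller_mul_coeff [CharP R p] (n : ℕ) (c : R) (x : WittVector p R) :
    (teichmuller p c * x).coeff n = c ^ p ^ n * x.coeff n := by
  induction n generalizing c x with
  | zero => rw [mul_coeff_zero, teichmuller_coeff_zero, pow_zero, pow_one]
  | succ n ih =>
      have key : teichmuller p c * x =
          teichmuller p (c * x.coeff 0) +
            verschiebung (teichmuller p (c ^ p) * shiftW x) := by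
        conv_lhs => rw [← decomp x]
        rw [mul_add, ← MonoidHom.map_mul, teich_mul_versch]
      rw [key, tv_coeff_succ, ih, shiftW_coeff, ← pow_mul, mul_comm p (p ^ n), ← pow_succ]

lemma sub_coeff_zero (x y : WittVector p R) :
    (x - y).coeff 0 = x.coeff 0 - y.coeff 0 := by
  have h := add_coeff_zero (p := p) (x - y) y
  rw [sub_add_cancel] at h
  rw [eq_sub_of_add_eq h.symm]

/-- product decomposition: `ζ * ω = [ζ₀ω₀] + V([ζ₀^p]ω' + [ω₀^p]ζ' + p ζ'ω')`. -/
lemma mul_decomp [CharP R p] (ζ ω : WittVector p R) :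
    ζ * ω = teichmuller p (ζ.coeff 0 * ω.coeff 0) +
      verschiebung (teichmuller p (ζ.coeff 0 ^ p) * shiftW ω +
        (teichmuller p (ω.coeff 0 ^ p) * shiftW ζ + (p : WittVector p R) * (shiftW ζ * shiftW ω))) := by
  conv_lhs => rw [← decomp ζ, ← decomp ω]
  have h1 : teichmuller p (ζ.coeff 0) * teichmuller p (ω.coeff 0) =
      teichmuller p (ζ.coeff 0 * ω.coeff 0) := (MonoidHom.map_mul _ _ _).symm
  have h2 : teichmuller p (ζ.coeff 0) * verschiebung (shiftW ω) =
      verschiebung (teichmuller p (ζ.coeff 0 ^ p) * shiftW ω) := teich_mul_versch _ _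
  have h3 : verschiebung (shiftW ζ) * teichmuller p (ω.coeff 0) =
      verschiebung (teichmuller p (ω.coeff 0 ^ p) * shiftW ζ) := by
    rw [mul_comm]; exact teich_mul_versch _ _
  have h4 : verschiebung (shiftW ζ) * verschiebung (shiftW ω) =
      verschiebung ((p : WittVector p R) * (shiftW ζ * shiftW ω)) := by
    have h5 := verschiebung_mul_frobenius (shiftW ζ) (verschiebung (shiftW ω))
    rw [frobenius_verschiebung] at h5
    rw [← h5]
    ring_nf
  rw [add_mul, mul_add, mul_add, h1, h2, h3, h4, add_assoc, ← map_add, ← map_add]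

end WittAux

section Analytic

open WittVector WittAux

variable (p : ℕ) [hp : Fact p.Prime] (F : Type*) [Field F] [Valued F ℝ≥0]

/-- the norm of an element of the ring of integers -/
noncomputable def vv (r : OK F) : ℝ≥0 := Valued.v (r : F)

variable {p F}

lemma vv_le_one (r : OK F) : vv F r ≤ 1 := r.2

lemma vv_mul (r s : OK F) : vv F (r * s) = vv F r * vv F s := by
  simp [vv, map_mul]

lemma vv_pow (r : OK F) (k : ℕ) : vv F (r ^ k) = vv F r ^ k := by
  simp [vv, map_pow]

lemma vv_eq_zero {r : OK F} : vv F r = 0 ↔ r = 0 := by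
  rw [vv, Valuation.zero_iff]
  exact ⟨fun h => Subtype.ext h, fun h => by rw [h]; rfl⟩

/-- `x` is dominated by `γ` : every coefficient satisfies `|xₙ| ≤ |γ|^(pⁿ)`. -/
def Dom (γ : OK F) (x : WittVector p (OK F)) : Prop :=
  ∀ n, vv F (x.coeff n) ≤ vv F γ ^ p ^ n

variable [CharP F p]

lemma dom_of_eq_mul {γ : OK F} {x y : WittVector p (OK F)}
    (h : x = teichmuller p γ * y) : Dom γ x := by
  intro n
  rw [h, teichmuller_mul_coeff, vv_mul, vv_pow]
  calc vv F γ ^ p ^ n * vv F (y.coeff n) ≤ vv F γ ^ p ^ n * 1 := by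
        exact mul_le_mul_right (vv_le_one _) _
    _ = vv F γ ^ p ^ n := mul_one _

lemma exists_of_dom {γ : OK F} {x : WittVector p (OK F)} (h : Dom γ x) :
    ∃ y, x = teichmuller p γ * y := by
  by_cases hγ : γ = 0
  · refine ⟨0, ?_⟩
    have hx : x = 0 := by
      ext n
      have := h n
      rw [hγ] at this
      simp only [vv_eq_zero.mpr rfl] at this
      rw [zero_pow (pow_ne_zero n hp.out.ne_zero)] at this
      have hxn : x.coeff n = 0 := vv_eq_zero.mp (le_antisymm this zero_le)
      simp [hxn]
    rw [hx, mul_zero]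
  · have hγF : (γ : F) ≠ 0 := fun hc => hγ (Subtype.ext hc)
    have hpow : ∀ n : ℕ, ((γ : F) ^ p ^ n) ≠ 0 := fun n => pow_ne_zero _ hγF
    refine ⟨WittVector.mk p (fun n => ⟨(x.coeff n : F) / (γ : F) ^ p ^ n, ?_⟩), ?_⟩
    · rw [Valuation.mem_integer_iff, map_div₀, map_pow]
      have h2 := h n
      have hv0 : Valued.v (γ : F) ≠ 0 := (Valuation.ne_zero_iff _).mpr hγF
      rw [div_le_iff₀ (pos_iff_ne_zero.mpr (pow_ne_zero _ hv0)), one_mul]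
      exact h2
    · ext n
      rw [teichmuller_mul_coeff]
      push_cast [WittVector.coeff_mk]
      rw [mul_comm, div_mul_cancel₀ _ (hpow n)]

lemma dom_sub {γ : OK F} {x y : WittVector p (OK F)} (hx : Dom γ x) (hy : Dom γ y) :
    Dom γ (x - y) := by
  obtain ⟨a, ha⟩ := exists_of_dom hx
  obtain ⟨b, hb⟩ := exists_of_dom hy
  exact dom_of_eq_mul (by rw [ha, hb, ← mul_sub])

end Analytic

section Step
open WittVector WittAux
variable {p : ℕ} [hp : Fact p.Prime] {F : Type*} [Field F] [Valued F ℝ≥0] [CharP F p]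

lemma step (ζ ω : WittVector p (OK F)) (γ : OK F) (q b : ℝ≥0)
    (hq : vv F (ζ.coeff 0) = q) (hq1 : q < 1)
    (hζ1 : vv F (ζ.coeff 1) = 1)
    (hγ : vv F γ = b) (hb : vv F ((ζ * ω).coeff 0) = b) (hb0 : b ≠ 0)
    (hdom : Dom γ (ζ * ω)) :
    vv F (ω.coeff 0) = b / q ∧
    ∃ (ω₂ : WittVector p (OK F)) (γ₂ : OK F),
      vv F ((frobenius ζ).coeff 0) = q ^ p ∧
      vv F ((frobenius ζ).coeff 1) = 1 ∧
      vv F γ₂ = (b / q) ^ p ∧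
      vv F (((frobenius ζ) * ω₂).coeff 0) = (b / q) ^ p ∧
      Dom γ₂ ((frobenius ζ) * ω₂) := by
  have hbq : b = q * vv F (ω.coeff 0) := by
    rw [← hb, mul_coeff_zero, vv_mul, hq]
  have hq0 : q ≠ 0 := fun h0 => hb0 (by rw [hbq, h0, zero_mul])
  have hw0 : vv F (ω.coeff 0) = b / q := by
    rw [hbq, mul_div_cancel_left₀ _ hq0]
  obtain ⟨m, hm⟩ := exists_of_dom hdom
  have hδ00 : (ζ * ω).coeff 0 = ζ.coeff 0 * ω.coeff 0 := mul_coeff_zero ζ ω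
  have hδ0γ : (ζ * ω).coeff 0 = γ * m.coeff 0 := by
    rw [hm, mul_coeff_zero, teichmuller_coeff_zero]
  set E := teichmuller p (ζ.coeff 0 ^ p) * shiftW ω +
      (teichmuller p (ω.coeff 0 ^ p) * shiftW ζ +
        (p : WittVector p (OK F)) * (shiftW ζ * shiftW ω)) with hE
  have hmd : ζ * ω = teichmuller p (ζ.coeff 0 * ω.coeff 0) + verschiebung E :=
    mul_decomp ζ ω
  set m' := shiftW (m - teichmuller p (m.coeff 0)) with hm'def
  have hmm : m - teichmuller p (m.coeff 0) = verschiebung m' :=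
    (eq_versch_shiftW _ (by rw [sub_coeff_zero, teichmuller_coeff_zero, sub_self])).symm
  have h1 : ζ * ω - teichmuller p ((ζ * ω).coeff 0) = verschiebung E := by
    rw [hδ00, hmd, add_sub_cancel_left]
  have h2 : ζ * ω - teichmuller p ((ζ * ω).coeff 0) =
      teichmuller p γ * verschiebung m' := by
    rw [hδ0γ, MonoidHom.map_mul, hm, ← mul_sub, hmm]
  have hVE : verschiebung E = verschiebung (teichmuller p (γ ^ p) * m') := by
    rw [← h1, h2, teich_mul_versch]
  have hE2 : E = teichmuller p (γ ^ p) * m' := by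
    have h3 := congrArg shiftW hVE
    rwa [shiftW_versch, shiftW_versch] at h3
  have hFζ : frobenius ζ = teichmuller p (ζ.coeff 0 ^ p) +
      shiftW ζ * (p : WittVector p (OK F)) := by
    conv_lhs => rw [← decomp ζ]
    rw [map_add, frobenius_teichmuller, frobenius_verschiebung]
  have hkey : frobenius ζ * shiftW ω =
      E - teichmuller p (ω.coeff 0 ^ p) * shiftW ζ := by
    rw [hFζ, hE]; ring
  have hE0 : vv F (E.coeff 0) ≤ b ^ p := by
    rw [hE2, mul_coeff_zero, teichmuller_coeff_zero, vv_mul, vv_pow, hγ]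
    exact le_trans (mul_le_mul_right (vv_le_one _) _) (le_of_eq (mul_one _))
  have hB : vv F ((teichmuller p (ω.coeff 0 ^ p) * shiftW ζ).coeff 0) = (b / q) ^ p := by
    rw [mul_coeff_zero, teichmuller_coeff_zero, vv_mul, vv_pow, hw0]
    have hs : vv F ((shiftW ζ).coeff 0) = 1 := by
      rw [shiftW_coeff]; exact hζ1
    rw [hs, mul_one]
  have hblt : b < b / q := by
    rw [lt_div_iff₀ (pos_iff_ne_zero.mpr hq0)]
    exact mul_lt_of_lt_one_right (pos_iff_ne_zero.mpr hb0) hq1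
  have hlt : b ^ p < (b / q) ^ p :=
    pow_lt_pow_left₀ hblt zero_le hp.out.ne_zero
  have hδ'0 : vv F ((frobenius ζ * shiftW ω).coeff 0) = (b / q) ^ p := by
    rw [hkey, sub_coeff_zero]
    have hcoe : ((E.coeff 0 - (teichmuller p (ω.coeff 0 ^ p) * shiftW ζ).coeff 0 : OK F) : F)
        = ((E.coeff 0 : OK F) : F) -
          (((teichmuller p (ω.coeff 0 ^ p) * shiftW ζ).coeff 0 : OK F) : F) := by
      push_cast; ring
    have hlt2 : Valued.v ((E.coeff 0 : OK F) : F) <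
        Valued.v (((teichmuller p (ω.coeff 0 ^ p) * shiftW ζ).coeff 0 : OK F) : F) := by
      show vv F _ < vv F _
      rw [hB]; exact lt_of_le_of_lt hE0 hlt
    show Valued.v _ = _
    rw [hcoe, Valued.v.map_sub_eq_of_lt_right hlt2]
    exact hB
  have hwne : vv F (ω.coeff 0) ≠ 0 := by
    rw [hw0]; exact div_ne_zero hb0 hq0
  have hw0F : ((ω.coeff 0 : OK F) : F) ≠ 0 := fun hc => hwne (by rw [vv, hc, map_zero])
  have hcmem : ((γ : F) ^ p / ((ω.coeff 0 : OK F) : F) ^ p) ∈ OK F := by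
    rw [Valuation.mem_integer_iff, map_div₀, map_pow, map_pow]
    have hvle : Valued.v ((γ : F)) ≤ Valued.v ((ω.coeff 0 : OK F) : F) := by
      show vv F γ ≤ vv F (ω.coeff 0)
      rw [hγ, hw0]; exact le_of_lt hblt
    have hne : Valued.v ((ω.coeff 0 : OK F) : F) ^ p ≠ 0 :=
      pow_ne_zero _ ((Valuation.ne_zero_iff _).mpr hw0F)
    rw [div_le_iff₀ (pos_iff_ne_zero.mpr hne), one_mul]
    exact pow_le_pow_left₀ zero_le hvle p
  set c : OK F := ⟨(γ : F) ^ p / ((ω.coeff 0 : OK F) : F) ^ p, hcmem⟩ with hc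
  have hcprod : (ω.coeff 0) ^ p * c = γ ^ p := by
    apply Subtype.ext
    push_cast
    rw [mul_comm, div_mul_cancel₀ _ (pow_ne_zero _ hw0F)]
  have hfact : frobenius ζ * shiftW ω =
      teichmuller p ((ω.coeff 0) ^ p) * (teichmuller p c * m' - shiftW ζ) := by
    rw [hkey, hE2, ← hcprod, MonoidHom.map_mul, mul_sub]
    ring
  have hγ₂ : vv F ((ω.coeff 0) ^ p) = (b / q) ^ p := by rw [vv_pow, hw0]
  refine ⟨hw0, shiftW ω, (ω.coeff 0) ^ p, ?_, ?_, hγ₂, hδ'0, dom_of_eq_mul hfact⟩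
  · rw [coeff_frobenius_charP, vv_pow, hq]
  · rw [coeff_frobenius_charP, vv_pow, hζ1, one_pow]

end Step

section Main
open WittVector WittAux
variable {p : ℕ} [hp : Fact p.Prime] {F : Type*} [Field F] [Valued F ℝ≥0] [CharP F p]

lemma chain (z w : WittVector p (OK F)) (γ : OK F) (a : ℝ≥0)
    (h1 : vv F (z.coeff 0) = (p : ℝ≥0)⁻¹) (h2 : vv F (z.coeff 1) = 1)
    (hγ : vv F γ = a) (hδ0 : vv F ((z * w).coeff 0) = a) (ha : a ≠ 0)
    (hdom : Dom γ (z * w)) (n : ℕ) :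
    ∃ (ζ ω : WittVector p (OK F)) (γ' : OK F),
      vv F (ζ.coeff 0) = ((p : ℝ≥0)⁻¹) ^ p ^ n ∧
      vv F (ζ.coeff 1) = 1 ∧
      vv F γ' = ((p : ℝ≥0) ^ n * a) ^ p ^ n ∧
      vv F ((ζ * ω).coeff 0) = ((p : ℝ≥0) ^ n * a) ^ p ^ n ∧
      Dom γ' (ζ * ω) := by
  have hp1 : (1 : ℝ≥0) < (p : ℝ≥0) := by exact_mod_cast hp.out.one_lt
  have hpne : (p : ℝ≥0) ≠ 0 := by positivity
  induction n with
  | zero => exact ⟨z, w, γ, by simpa using h1, h2, by simpa using hγ, by simpa using hδ0, hdom⟩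
  | succ n ih =>
      obtain ⟨ζ, ω, γ', hA, hB, hC, hD, hE⟩ := ih
      have hq1 : ((p : ℝ≥0)⁻¹) ^ p ^ n < 1 :=
        pow_lt_one₀ zero_le (inv_lt_one_of_one_lt₀ hp1) (pow_ne_zero n hp.out.ne_zero)
      have hb0 : ((p : ℝ≥0) ^ n * a) ^ p ^ n ≠ 0 :=
        pow_ne_zero _ (mul_ne_zero (pow_ne_zero _ hpne) ha)
      obtain ⟨-, ω₂, γ₂, c1, c2, c3, c4, c5⟩ :=
        step ζ ω γ' _ _ hA hq1 hB hC hD hb0 hE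
      have harith : (((p : ℝ≥0) ^ n * a) ^ p ^ n / ((p : ℝ≥0)⁻¹) ^ p ^ n) ^ p =
          ((p : ℝ≥0) ^ (n + 1) * a) ^ p ^ (n + 1) := by
        have hmul : (p : ℝ≥0) ^ n * a * p = (p : ℝ≥0) ^ (n + 1) * a := by ring
        rw [← div_pow, div_eq_mul_inv, inv_inv, hmul, ← pow_mul, ← pow_succ]
      have hqarith : (((p : ℝ≥0)⁻¹) ^ p ^ n) ^ p = ((p : ℝ≥0)⁻¹) ^ p ^ (n + 1) := by
        rw [← pow_mul, ← pow_succ]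
      refine ⟨frobenius ζ, ω₂, γ₂, ?_, c2, ?_, ?_, c5⟩
      · rw [c1, hqarith]
      · rw [c3, harith]
      · rw [c4, harith]

lemma final (a : ℝ≥0)
    (ha : a ≠ 0)
    (h : ∀ n : ℕ, ((p : ℝ≥0) ^ n * a) ^ p ^ n ≤ ((p : ℝ≥0)⁻¹) ^ p ^ n) : False := by
  have hp1 : (1 : ℝ≥0) < (p : ℝ≥0) := by exact_mod_cast hp.out.one_lt
  have key : ∀ n : ℕ, (p : ℝ≥0) ^ n * a ≤ 1 := by
    intro n
    have h2 : (p : ℝ≥0) ^ n * a ≤ (p : ℝ≥0)⁻¹ :=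
      le_of_pow_le_pow_left₀ (pow_ne_zero n hp.out.ne_zero) zero_le (h n)
    exact le_trans h2 (inv_le_one_of_one_le₀ hp1.le)
  obtain ⟨n, hn⟩ := exists_nat_gt (a⁻¹ : ℝ≥0)
  have hna : (1 : ℝ≥0) < (n : ℝ≥0) * a := by
    have := mul_lt_mul_of_pos_right hn (pos_iff_ne_zero.mpr ha)
    rwa [inv_mul_cancel₀ ha] at this
  have hnp : (n : ℝ≥0) ≤ (p : ℝ≥0) ^ n := by
    exact_mod_cast le_of_lt (Nat.lt_pow_self hp.out.one_lt : n < p ^ n)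
  exact absurd (key n) (not_le.mpr (lt_of_lt_of_le hna (mul_le_mul_left hnp a)))

lemma stable_bound (x : WittVector p (OK F)) (hx : IsStable p F x) (n : ℕ) :
    vv F (x.coeff n) ≤ vv F (x.coeff 0) ^ p ^ n := by
  have hpR : (p : ℝ) ≠ 0 := Nat.cast_ne_zero.mpr hp.out.ne_zero
  rcases Nat.eq_zero_or_pos n with rfl | hn
  · simp
  · have h := hx n hn
    rw [tcNorm, tcNorm] at h
    rw [pow_zero, NNReal.rpow_one] at h
    have hrt : ((((p : ℝ))⁻¹ ^ n : ℝ)) * ((p : ℝ) ^ n) = 1 := by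
      rw [← mul_pow, inv_mul_cancel₀ hpR, one_pow]
    have hA : vv F (x.coeff n) =
        ((vv F (x.coeff n)) ^ ((((p : ℝ))⁻¹ ^ n : ℝ))) ^ ((p : ℝ) ^ n) := by
      rw [← NNReal.rpow_mul, hrt, NNReal.rpow_one]
    rw [hA, ← NNReal.rpow_natCast (vv F (x.coeff 0)) (p ^ n), Nat.cast_pow]
    exact NNReal.rpow_le_rpow h (by positivity)

lemma aux (z x y : WittVector p (OK F)) (hz : IsPrimitive p F z)
    (hx : IsStable p F x) (hy : IsStable p F y) (w : WittVector p (OK F))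
    (hw : x - y = z * w) (hlt : vv F (y.coeff 0) < vv F (x.coeff 0)) : False := by
  set a := vv F (x.coeff 0) with hadef
  have ha0 : a ≠ 0 := fun h0 => by simp [h0] at hlt
  have hγa : vv F (x.coeff 0 - y.coeff 0) = a := by
    show Valued.v ((x.coeff 0 - y.coeff 0 : OK F) : F) = a
    push_cast
    exact Valued.v.map_sub_eq_of_lt_left hlt
  have hδ0 : vv F ((z * w).coeff 0) = a := by
    rw [← hw, sub_coeff_zero]
    exact hγa
  have hdom : Dom (x.coeff 0 - y.coeff 0) (z * w) := by
    rw [← hw]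
    apply dom_sub
    · intro n; rw [hγa]; exact stable_bound x hx n
    · intro n; rw [hγa]
      exact le_trans (stable_bound y hy n) (pow_le_pow_left₀ zero_le hlt.le _)
  have hbound : ∀ n : ℕ, ((p : ℝ≥0) ^ n * a) ^ p ^ n ≤ ((p : ℝ≥0)⁻¹) ^ p ^ n := by
    intro n
    obtain ⟨ζ, ω, γ', hA, hB, hC, hD, hE⟩ :=
      chain z w (x.coeff 0 - y.coeff 0) a hz.1 hz.2 hγa hδ0 ha0 hdom n
    calc ((p : ℝ≥0) ^ n * a) ^ p ^ n = vv F (ζ.coeff 0) * vv F (ω.coeff 0) := by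
          rw [← hD, mul_coeff_zero, vv_mul]
      _ ≤ vv F (ζ.coeff 0) * 1 := mul_le_mul_right (vv_le_one _) _
      _ = ((p : ℝ≥0)⁻¹) ^ p ^ n := by rw [mul_one, hA]
  exact final a ha0 hbound

end Main

/-- If `z ∈ W(o_F)` is primitive and `x, y ∈ W(o_F)` are stable and congruent modulo `z`,
then their zeroth Teichmüller coordinates have the same norm. -/
theorem stable_congruent_same_norm (p : ℕ) [Fact p.Prime] (F : Type*) [Field F]
    [Valued F ℝ≥0] [CompleteSpace F] [ExpChar F p] [PerfectRing F p]
    (z x y : WittVector p (OK F)) (hz : IsPrimitive p F z)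
    (hx : IsStable p F x) (hy : IsStable p F y) (hcong : z ∣ (x - y)) :
    Valued.v ((x.coeff 0 : OK F) : F) = Valued.v ((y.coeff 0 : OK F) : F) := by
  haveI hcp : CharP F p := by
    rcases ‹ExpChar F p› with _ | _
    · exact absurd (Fact.out : Nat.Prime 1) Nat.not_prime_one
    · assumption
  rcases hcong with ⟨w, hw⟩
  rcases lt_trichotomy (Valued.v ((y.coeff 0 : OK F) : F)) (Valued.v ((x.coeff 0 : OK F) : F))
    with h | h | h
  · exact (aux z x y hz hx hy w hw h).elim
  · exact h.symm
  · have hw' : y - x = z * (-w) := by rw [mul_neg, ← hw]; ring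
    exact (aux z y x hz hy hx (-w) hw' h).elim
end
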